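/- arXiv:2510.19567 — 6 statements merged into one kernel-verified Lean document; each statement's English description precedes it below -/
import Mathlib

section
/- Let G = (V,E) be a finite, simple, undirected, connected graph, let n ≥ 1, and let S, T ⊆ V be connected vertex sets with |S| = |T| = n. Then there exists a valid plan from S to T. In particular, every instance of Connected Unlabeled Multi-Agent Pathfinding on a finite connected graph is solvable. -/
open SimpleGraph

variable {V : Type*}

/-- A vertex set `Q` is connected if the subgraph of `G` induced by `Q` is connected. -/
def ConnSet (G : SimpleGraph V) (Q : Finset V) : Prop :=
  (G.induce (Q : Set V)).Connected

/-- `Q'` is reachable from `Q` in one step: there is a bijection `φ` between the two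
vertex sets moving every agent to an adjacent vertex or keeping it in place,
with no swap conflict. -/
def OneStep (G : SimpleGraph V) (Q Q' : Finset V) : Prop :=
  ∃ φ : {x // x ∈ Q} ≃ {x // x ∈ Q'},
    (∀ v : {x // x ∈ Q}, ((φ v : V) = (v : V)) ∨ G.Adj (v : V) ((φ v : V))) ∧
    ∀ u v : {x // x ∈ Q}, (u : V) ≠ (v : V) →
      ¬(((φ u : V) = (v : V)) ∧ ((φ v : V) = (u : V)))

/-- A valid plan from `S` to `T` with makespan `tstar`: a sequence of vertex sets,
each of size `n` and connected, starting at `S`, ending at `T`, with each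
consecutive pair one-step reachable. -/
def ValidPlan (G : SimpleGraph V) (n : ℕ) (S T : Finset V) (tstar : ℕ)
    (P : ℕ → Finset V) : Prop :=
  P 0 = S ∧ P tstar = T ∧
  (∀ k ≤ tstar, (P k).card = n ∧ ConnSet G (P k)) ∧
  ∀ k < tstar, OneStep G (P k) (P (k + 1))

section Aux
variable [DecidableEq V]

def WalkIn (G : SimpleGraph V) (Q : Finset V) (a b : V) : Prop :=
  ∃ p : G.Walk a b, ∀ x ∈ p.support, x ∈ Q

lemma walkIn_of_induce {G : SimpleGraph V} {Q : Finset V} {a b : ↥(Q : Set V)}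
    (h : (G.induce (Q : Set V)).Reachable a b) : WalkIn G Q a b := by
  obtain ⟨p⟩ := h
  refine ⟨p.map ⟨Subtype.val, fun h => h⟩, ?_⟩
  intro x hx
  rw [Walk.support_map, List.mem_map] at hx
  obtain ⟨y, -, rfl⟩ := hx
  exact y.2

lemma induce_reachable_of_walkIn {G : SimpleGraph V} {Q : Finset V} {a b : V}
    (h : WalkIn G Q a b) (ha : a ∈ Q) (hb : b ∈ Q) :
    (G.induce (Q : Set V)).Reachable ⟨a, ha⟩ ⟨b, hb⟩ := by
  obtain ⟨p, hp⟩ := h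
  induction p with
  | nil => exact Reachable.refl _
  | @cons u c w huc p ih =>
    have hc : c ∈ Q := hp c (by simp)
    exact (Adj.reachable (by exact huc : (G.induce (Q:Set V)).Adj ⟨u, ha⟩ ⟨c, hc⟩)).trans
      (ih hc hb (fun x hx => hp x (by simp [hx])))

lemma connSet_iff {G : SimpleGraph V} {Q : Finset V} :
    ConnSet G Q ↔ Q.Nonempty ∧ ∀ a ∈ Q, ∀ b ∈ Q, WalkIn G Q a b := by
  constructor
  · intro h
    obtain ⟨x⟩ := h.nonempty
    exact ⟨⟨x, x.2⟩, fun a ha b hb => walkIn_of_induce (h.preconnected ⟨a, ha⟩ ⟨b, hb⟩)⟩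
  · rintro ⟨⟨x, hx⟩, h⟩
    have : Nonempty ↥(Q : Set V) := ⟨⟨x, hx⟩⟩
    exact ⟨fun a b => induce_reachable_of_walkIn (h a a.2 b b.2) a.2 b.2⟩

set_option linter.unusedSectionVars false

lemma connSet_singleton (G : SimpleGraph V) (v : V) : ConnSet G {v} := by
  rw [connSet_iff]
  refine ⟨⟨v, by simp⟩, ?_⟩
  intro a ha b hb
  simp only [Finset.mem_singleton] at ha hb
  subst ha; subst hb
  exact ⟨Walk.nil, by simp⟩

lemma walkIn_mono {G : SimpleGraph V} {Q Q' : Finset V} {a b : V} (h : WalkIn G Q a b)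
    (hQQ : Q ⊆ Q') : WalkIn G Q' a b := by
  obtain ⟨p, hp⟩ := h
  exact ⟨p, fun x hx => hQQ (hp x hx)⟩

lemma connSet_insert {G : SimpleGraph V} {Q : Finset V} {a u : V} (hQ : ConnSet G Q)
    (ha : a ∈ Q) (hadj : G.Adj a u) : ConnSet G (insert u Q) := by
  rw [connSet_iff] at hQ ⊢
  obtain ⟨hne, h⟩ := hQ
  refine ⟨⟨u, by simp⟩, ?_⟩
  have hu : WalkIn G (insert u Q) u a :=
    ⟨Walk.cons hadj.symm Walk.nil, by simp [ha]⟩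
  have key : ∀ b ∈ insert u Q, WalkIn G (insert u Q) u b := by
    intro b hb
    rcases Finset.mem_insert.1 hb with rfl | hb
    · exact ⟨Walk.nil, by simp⟩
    · obtain ⟨p, hp⟩ := h a ha b hb
      obtain ⟨q, hq⟩ := hu
      exact ⟨q.append p, by
        intro x hx
        rcases (Walk.mem_support_append_iff _ _).1 hx with hx | hx
        · exact hq x hx
        · exact Finset.mem_insert_of_mem (hp x hx)⟩
  intro x hx y hy
  obtain ⟨p, hp⟩ := key x hx
  obtain ⟨q, hq⟩ := key y hy
  exact ⟨p.reverse.append q, by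
    intro z hz
    rcases (Walk.mem_support_append_iff _ _).1 hz with hz | hz
    · exact hp z (by simpa using hz)
    · exact hq z hz⟩

lemma exists_adj_outside {G : SimpleGraph V} {Q A : Finset V} (hQ : ConnSet G Q)
    (hAQ : A ⊆ Q) (hA : A.Nonempty) (hne : A ≠ Q) :
    ∃ u ∈ Q, u ∉ A ∧ ∃ a ∈ A, G.Adj a u := by
  obtain ⟨a₀, ha₀⟩ := hA
  have : ∃ q ∈ Q, q ∉ A := by
    by_contra h
    push_neg at h
    exact hne (Finset.Subset.antisymm hAQ h)
  obtain ⟨q, hq, hqA⟩ := this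
  obtain ⟨p, hp⟩ := (connSet_iff.1 hQ).2 a₀ (hAQ ha₀) q hq
  clear hq
  induction p with
  | @nil x => exact absurd ha₀ (by simpa using hqA)
  | @cons x c w hxc p ih =>
    by_cases hc : c ∈ A
    · exact ih hc hqA (fun z hz => hp z (by simp [hz]))
    · exact ⟨c, hp c (by simp), hc, x, ha₀, hxc⟩

lemma exists_noncut {G : SimpleGraph V} {Q A : Finset V} (hQ : ConnSet G Q)
    (hA : ConnSet G A) (hAQ : A ⊆ Q) (hne : A ≠ Q) :
    ∃ w ∈ Q, w ∉ A ∧ ConnSet G (Q.erase w) := by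
  obtain ⟨k, hk⟩ : ∃ k, (Q \ A).card = k := ⟨_, rfl⟩
  induction k generalizing A with
  | zero =>
    exfalso
    rw [Finset.card_eq_zero, Finset.sdiff_eq_empty_iff_subset] at hk
    exact hne (Finset.Subset.antisymm hAQ hk)
  | succ k ih =>
    rcases Nat.eq_zero_or_pos k with rfl | hkpos
    · -- Q \ A = {w}
      obtain ⟨w, hw⟩ := Finset.card_eq_one.1 hk
      have hwQ : w ∈ Q ∧ w ∉ A := by
        have := Finset.mem_sdiff.1 (hw ▸ Finset.mem_singleton_self w)
        exact this
      refine ⟨w, hwQ.1, hwQ.2, ?_⟩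
      have : Q.erase w = A := by
        apply Finset.Subset.antisymm
        · intro x hx
          obtain ⟨hxw, hxQ⟩ := Finset.mem_erase.1 hx
          by_contra hxA
          have : x ∈ Q \ A := Finset.mem_sdiff.2 ⟨hxQ, hxA⟩
          rw [hw, Finset.mem_singleton] at this
          exact hxw this
        · intro x hx
          exact Finset.mem_erase.2 ⟨fun h => hwQ.2 (h ▸ hx), hAQ hx⟩
      rw [this]; exact hA
    · have hAne : A.Nonempty := (connSet_iff.1 hA).1
      obtain ⟨u, huQ, huA, a, haA, hadj⟩ := exists_adj_outside hQ hAQ hAne hne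
      have hA' : ConnSet G (insert u A) := connSet_insert hA haA hadj
      have hsub' : insert u A ⊆ Q := Finset.insert_subset huQ hAQ
      have hcard' : (Q \ insert u A).card = k := by
        have : Q \ insert u A = (Q \ A).erase u := by
          ext x
          simp only [Finset.mem_sdiff, Finset.mem_erase, Finset.mem_insert]
          tauto
        rw [this, Finset.card_erase_of_mem (Finset.mem_sdiff.2 ⟨huQ, huA⟩), hk]
        omega
      have hne' : insert u A ≠ Q := by
        intro h
        rw [h, Finset.sdiff_self, Finset.card_empty] at hcard'
        omega
      obtain ⟨w, hwQ, hwA', hconn⟩ := ih hA' hsub' hne' hcard'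
      exact ⟨w, hwQ, fun h => hwA' (Finset.mem_insert_of_mem h), hconn⟩

lemma oneStep_of_list {G : SimpleGraph V} {Q : Finset V} {u w : V} (L : List V)
    (hnd : L.Nodup) (hch : L.Chain' G.Adj) (hmem : ∀ x ∈ L, x ∈ insert u Q)
    (hne : L ≠ []) (hhead : L.head hne = w) (hlast : L.getLast hne = u)
    (hw : w ∈ Q) (hu : u ∉ Q) :
    OneStep G Q (insert u (Q.erase w)) := by
  have hlenpos : 0 < L.length := List.length_pos_iff.2 hne
  have hL0 : L[0] = w := by rw [← List.head_eq_getElem]; exact hhead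
  have hLlast : L[L.length - 1] = u := by rw [← List.getLast_eq_getElem]; exact hlast
  have hwu : w ≠ u := fun h => hu (h ▸ hw)
  set f := L.formPerm with hf
  -- index of an element of Q in L
  have h1 : ∀ x, x ∈ Q → x ∈ L → ∃ (i : ℕ) (h : i + 1 < L.length),
      x = L[i]'(Nat.lt_of_succ_lt h) ∧ f x = L[i+1] := by
    intro x hxQ hxL
    obtain ⟨i, hi, hix⟩ := List.mem_iff_getElem.1 hxL
    have hine : i ≠ L.length - 1 := by
      intro h
      subst h
      rw [hLlast] at hix
      exact hu (hix ▸ hxQ)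
    have hi1 : i + 1 < L.length := by omega
    refine ⟨i, hi1, hix.symm, ?_⟩
    rw [← hix, hf, List.formPerm_apply_getElem _ hnd i hi]
    congr 1
    exact Nat.mod_eq_of_lt hi1
  have h3 : ∀ x, x ∉ L → f x = x := fun x hx => List.formPerm_apply_of_notMem hx
  have hfu : f u = w := by
    have := List.formPerm_apply_getElem L hnd (L.length - 1) (by omega)
    rw [hLlast] at this
    rw [hf, this]
    have : (L.length - 1 + 1) % L.length = 0 := by
      have : L.length - 1 + 1 = L.length := by omega
      rw [this, Nat.mod_self]
    simp only [this]
    exact hL0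
  have hwL : w ∈ L := hL0 ▸ List.getElem_mem _
  have huL : u ∈ L := hLlast ▸ List.getElem_mem _
  have hiff : ∀ a, a ∈ Q ↔ f a ∈ insert u (Q.erase w) := by
    intro a
    constructor
    · intro haQ
      by_cases haL : a ∈ L
      · obtain ⟨i, hi1, hia, hfa⟩ := h1 a haQ haL
        have hmem' : L[i+1] ∈ insert u Q := hmem _ (List.getElem_mem _)
        have hne0 : L[i+1] ≠ w := by
          rw [← hL0]
          intro h
          have := hnd.getElem_inj_iff.1 h
          omega
        rw [hfa]
        rcases Finset.mem_insert.1 hmem' with h | h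
        · exact Finset.mem_insert.2 (Or.inl h)
        · exact Finset.mem_insert.2 (Or.inr (Finset.mem_erase.2 ⟨hne0, h⟩))
      · rw [h3 a haL]
        have haw : a ≠ w := fun h => haL (h ▸ hwL)
        have hau : a ≠ u := fun h => hu (h ▸ haQ)
        exact Finset.mem_insert.2 (Or.inr (Finset.mem_erase.2 ⟨haw, haQ⟩))
    · intro hfa
      by_contra haQ
      by_cases hau : a = u
      · subst hau
        rw [hfu] at hfa
        rcases Finset.mem_insert.1 hfa with h | h
        · exact hwu h
        · exact (Finset.mem_erase.1 h).1 rfl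
      · have haL : a ∉ L := by
          intro h
          rcases Finset.mem_insert.1 (hmem a h) with h' | h'
          · exact hau h'
          · exact haQ h'
        rw [h3 a haL] at hfa
        rcases Finset.mem_insert.1 hfa with h | h
        · exact hau h
        · exact haQ (Finset.mem_erase.1 h).2
  refine ⟨Equiv.subtypeEquiv f hiff, ?_, ?_⟩
  · rintro ⟨v, hv⟩
    simp only [Equiv.subtypeEquiv_apply]
    by_cases hvL : v ∈ L
    · obtain ⟨i, hi1, hiv, hfv⟩ := h1 v hv hvL
      right
      rw [hfv, hiv]
      have := List.isChain_iff_getElem.1 hch i (by omega)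
      simpa using this
    · left; exact h3 v hvL
  · rintro ⟨a, ha⟩ ⟨b, hb⟩ hab ⟨h1', h2'⟩
    simp only [Equiv.subtypeEquiv_apply] at h1' h2'
    simp only [ne_eq] at hab
    by_cases haL : a ∈ L
    · obtain ⟨i, hi1, hia, hfa⟩ := h1 a ha haL
      rw [hfa] at h1'
      have hbL : b ∈ L := h1' ▸ List.getElem_mem _
      obtain ⟨j, hj1, hjb, hfb⟩ := h1 b hb hbL
      have hji : j = i + 1 := by
        apply hnd.getElem_inj_iff.1
        rw [← hjb, h1']
      subst hji
      rw [hfb] at h2'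
      rw [hia] at h2'
      have := hnd.getElem_inj_iff.1 h2'
      omega
    · rw [h3 a haL] at h1'
      exact hab h1'

lemma step_lemma {G : SimpleGraph V} {Q A : Finset V} {u q : V} (hQ : ConnSet G Q)
    (hu : u ∉ Q) (hq : q ∈ Q) (hadj : G.Adj q u)
    (hA : ConnSet G A) (huA : u ∈ A) (hAsub : A ⊆ insert u Q) (hAne : A ≠ insert u Q) :
    ∃ Q', OneStep G Q Q' ∧ ConnSet G Q' ∧ Q'.card = Q.card ∧ A ⊆ Q' ∧ Q' ⊆ insert u Q := by
  have hQp : ConnSet G (insert u Q) := connSet_insert hQ hq hadj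
  obtain ⟨w, hwQp, hwA, hconn⟩ := exists_noncut hQp hA hAsub hAne
  have hwu : w ≠ u := fun h => hwA (h ▸ huA)
  have hwQ : w ∈ Q := by
    rcases Finset.mem_insert.1 hwQp with h | h
    · exact absurd h hwu
    · exact h
  have herase : (insert u Q).erase w = insert u (Q.erase w) :=
    Finset.erase_insert_of_ne hwu.symm
  obtain ⟨p, hp⟩ := (connSet_iff.1 hQp).2 w (Finset.mem_insert_of_mem hwQ) u
    (Finset.mem_insert_self u Q)
  have hstep : OneStep G Q (insert u (Q.erase w)) := by
    refine oneStep_of_list p.bypass.support p.bypass_isPath.support_nodup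
      p.bypass.isChain_adj_support
      (fun x hx => hp x (Walk.support_bypass_subset _ hx))
      (Walk.support_ne_nil _) (Walk.head_support _) (Walk.getLast_support _) hwQ hu
  refine ⟨insert u (Q.erase w), hstep, herase ▸ hconn, ?_, ?_, ?_⟩
  · rw [Finset.card_insert_of_notMem (fun h => hu (Finset.erase_subset _ _ h)),
      Finset.card_erase_of_mem hwQ]
    have : 0 < Q.card := Finset.card_pos.2 ⟨w, hwQ⟩
    omega
  · rw [← herase]
    intro x hx
    exact Finset.mem_erase.2 ⟨fun h => hwA (h ▸ hx), hAsub hx⟩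
  · intro x hx
    rcases Finset.mem_insert.1 hx with rfl | hx
    · exact Finset.mem_insert_self _ _
    · exact Finset.mem_insert_of_mem (Finset.erase_subset _ _ hx)

def Reach (G : SimpleGraph V) (n : ℕ) (S T : Finset V) : Prop :=
  ∃ tstar P, ValidPlan G n S T tstar P

lemma reach_refl {G : SimpleGraph V} {n : ℕ} {Q : Finset V} (h1 : Q.card = n)
    (h2 : ConnSet G Q) : Reach G n Q Q :=
  ⟨0, fun _ => Q, rfl, rfl, fun _ _ => ⟨h1, h2⟩, fun k hk => absurd hk (by omega)⟩

lemma reach_single {G : SimpleGraph V} {n : ℕ} {Q Q' : Finset V} (h : OneStep G Q Q')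
    (h1 : Q.card = n) (h2 : ConnSet G Q) (h1' : Q'.card = n) (h2' : ConnSet G Q') :
    Reach G n Q Q' := by
  refine ⟨1, fun k => if k = 0 then Q else Q', by simp, by simp, ?_, ?_⟩
  · intro k hk
    interval_cases k <;> simp [h1, h2, h1', h2']
  · intro k hk
    interval_cases k
    simpa using h

lemma reach_trans {G : SimpleGraph V} {n : ℕ} {S T U : Finset V}
    (h1 : Reach G n S T) (h2 : Reach G n T U) : Reach G n S U := by
  obtain ⟨t1, P1, hP10, hP1t, hP1c, hP1s⟩ := h1
  obtain ⟨t2, P2, hP20, hP2t, hP2c, hP2s⟩ := h2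
  refine ⟨t1 + t2, fun k => if k ≤ t1 then P1 k else P2 (k - t1), by simp [hP10], ?_, ?_, ?_⟩
  · by_cases h : t2 = 0
    · simp only [h, Nat.add_zero, if_pos le_rfl, hP1t, ← hP2t, h]
      exact hP20.symm
    · have : ¬ (t1 + t2 ≤ t1) := by omega
      simp only [this, if_false]
      rw [Nat.add_sub_cancel_left, hP2t]
  · intro k hk
    by_cases h : k ≤ t1
    · simp only [if_pos h]
      exact hP1c k h
    · simp only [if_neg h]
      exact hP2c (k - t1) (by omega)
  · intro k hk
    by_cases h : k + 1 ≤ t1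
    · simp only [if_pos (by omega : k ≤ t1), if_pos h]
      exact hP1s k (by omega)
    · by_cases h' : k ≤ t1
      · have hk1 : k = t1 := by omega
        subst hk1
        simp only [if_pos le_rfl, if_neg h, Nat.add_sub_cancel_left, hP1t, ← hP20]
        exact hP2s 0 (by omega)
      · simp only [if_neg h', if_neg h]
        have : k + 1 - t1 = (k - t1) + 1 := by omega
        rw [this]
        exact hP2s (k - t1) (by omega)

lemma phase1 {G : SimpleGraph V} {n : ℕ} {t₀ : V} :
    ∀ {q : V} (p : G.Walk q t₀) {Q : Finset V}, ConnSet G Q → Q.card = n → q ∈ Q →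
    ∃ Q₁, Reach G n Q Q₁ ∧ ConnSet G Q₁ ∧ Q₁.card = n ∧ t₀ ∈ Q₁ := by
  intro q p
  induction p with
  | nil =>
    intro Q hQ hcard hq
    exact ⟨Q, reach_refl hcard hQ, hQ, hcard, hq⟩
  | @cons q c _ hadj p ih =>
    intro Q hQ hcard hq
    by_cases hc : c ∈ Q
    · exact ih hQ hcard hc
    · have hAne : ({c} : Finset V) ≠ insert c Q := by
        intro h
        have : q ∈ ({c} : Finset V) := h ▸ Finset.mem_insert_of_mem hq
        rw [Finset.mem_singleton] at this
        exact hc (this ▸ hq)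
      obtain ⟨Q', hstep, hconn', hcard', hsub', -⟩ :=
        step_lemma hQ hc hq hadj (connSet_singleton G c) (Finset.mem_singleton_self c)
          (Finset.singleton_subset_iff.2 (Finset.mem_insert_self c Q)) hAne
      obtain ⟨Q₁, hreach, h1, h2, h3⟩ := ih hconn' (hcard' ▸ hcard)
        (hsub' (Finset.mem_singleton_self c))
      exact ⟨Q₁, reach_trans (reach_single hstep hcard hQ (hcard' ▸ hcard) hconn') hreach,
        h1, h2, h3⟩

lemma phase2 {G : SimpleGraph V} {n : ℕ} {T : Finset V} (hT : ConnSet G T)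
    (hTcard : T.card = n) :
    ∀ k {A Q : Finset V}, (T \ A).card = k → A.Nonempty → ConnSet G A → A ⊆ T →
      A ⊆ Q → ConnSet G Q → Q.card = n → Reach G n Q T := by
  intro k
  induction k with
  | zero =>
    intro A Q hk hAne hA hAT hAQ hQ hQcard
    rw [Finset.card_eq_zero, Finset.sdiff_eq_empty_iff_subset] at hk
    have hTQ : T ⊆ Q := fun x hx => hAQ (hk hx)
    have h : T = Q := Finset.eq_of_subset_of_card_le hTQ (by omega)
    cases h
    exact reach_refl hQcard hQ
  | succ k ih =>
    intro A Q hk hAne hA hAT hAQ hQ hQcard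
    have hneT : A ≠ T := by
      intro h
      rw [h, Finset.sdiff_self, Finset.card_empty] at hk
      omega
    obtain ⟨u, huT, huA, a, haA, hadj⟩ := exists_adj_outside hT hAT hAne hneT
    have hA' : ConnSet G (insert u A) := connSet_insert hA haA hadj
    have hA'T : insert u A ⊆ T := Finset.insert_subset huT hAT
    have hk' : (T \ insert u A).card = k := by
      have heq : T \ insert u A = (T \ A).erase u := by
        ext x
        simp only [Finset.mem_sdiff, Finset.mem_erase, Finset.mem_insert]
        tauto
      rw [heq, Finset.card_erase_of_mem (Finset.mem_sdiff.2 ⟨huT, huA⟩), hk]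
      omega
    by_cases huQ : u ∈ Q
    · exact ih hk' (Finset.insert_nonempty u A) hA' hA'T
        (Finset.insert_subset huQ hAQ) hQ hQcard
    · have hAne' : insert u A ≠ insert u Q := by
        intro h
        have hcards : (insert u A).card ≤ n := hTcard ▸ Finset.card_le_card hA'T
        rw [h, Finset.card_insert_of_notMem huQ, hQcard] at hcards
        omega
      obtain ⟨Q', hstep, hconn', hcard', hsub', -⟩ :=
        step_lemma hQ huQ (hAQ haA) hadj hA' (Finset.mem_insert_self u A)
          (Finset.insert_subset_insert u hAQ) hAne'
      have hQ'card : Q'.card = n := hcard' ▸ hQcard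
      exact reach_trans (reach_single hstep hQcard hQ hQ'card hconn')
        (ih hk' (Finset.insert_nonempty u A) hA' hA'T hsub' hconn' hQ'card)

end Aux


/-- Every instance of Connected Unlabeled Multi-Agent Pathfinding on a finite
connected graph is solvable: a valid plan from `S` to `T` always exists. -/
theorem stmt0 [Fintype V] (G : SimpleGraph V) (hG : G.Connected)
    (n : ℕ) (hn : 1 ≤ n) (S T : Finset V)
    (hS : ConnSet G S) (hT : ConnSet G T)
    (hScard : S.card = n) (hTcard : T.card = n) :
    ∃ (tstar : ℕ) (P : ℕ → Finset V), ValidPlan G n S T tstar P := by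
  classical
  obtain ⟨s, hs⟩ : S.Nonempty := Finset.card_pos.1 (by omega)
  obtain ⟨t₀, ht₀⟩ : T.Nonempty := Finset.card_pos.1 (by omega)
  obtain ⟨p⟩ := hG.preconnected s t₀
  obtain ⟨Q₁, hreach1, hQ₁, hQ₁card, ht₀Q₁⟩ := phase1 p hS hScard hs
  have hreach2 : Reach G n Q₁ T :=
    phase2 hT hTcard (T \ {t₀}).card rfl (Finset.singleton_nonempty t₀)
      (connSet_singleton G t₀) (Finset.singleton_subset_iff.2 ht₀)
      (Finset.singleton_subset_iff.2 ht₀Q₁) hQ₁ hQ₁card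
  exact reach_trans hreach1 hreach2
end

section
/- Let G = (V,E) be a finite, simple, undirected, connected graph, let Q ⊆ V be a nonempty connected vertex set, let t ∈ N(Q), and let V' ⊊ Q be a proper subset such that either V' = ∅, or the induced subgraph G[V'] is connected and t is adjacent to some vertex of V'. Then there exists a vertex v ∈ Q \ V' that is not a cut vertex of the induced subgraph G[Q ∪ {t}]. -/
open SimpleGraph

variable {V : Type*}

/-- `w` is a cut vertex of the (connected) induced subgraph `G[W]`:
deleting `w` from `G[W]` leaves a disconnected graph. -/
def IsCutVertex (G : SimpleGraph V) (W : Set V) (w : V) : Prop :=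
  w ∈ W ∧ (G.induce W).Connected ∧ ¬ (G.induce (W \ {w})).Connected

private lemma reach_avoid {G : SimpleGraph V} {W : Set V} {v : V} :
    ∀ {a b : ↥W} (p : (G.induce W).Walk a b), (∀ x ∈ p.support, (x : V) ≠ v) →
    ∀ (ha : (a : V) ∈ W \ {v}) (hb : (b : V) ∈ W \ {v}),
    (G.induce (W \ {v})).Reachable ⟨a, ha⟩ ⟨b, hb⟩ := by
  intro a b p
  induction p with
  | nil => intro _ ha hb; exact Reachable.refl _
  | @cons a c b h q ih =>
    intro hp ha hb
    have hc : (c : V) ∈ W \ {v} :=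
      ⟨c.2, hp c (by simp [SimpleGraph.Walk.support_cons])⟩
    have hadj : (G.induce (W \ {v})).Adj ⟨a, ha⟩ ⟨c, hc⟩ := h
    exact hadj.reachable.trans
      (ih (fun x hx => hp x (by simp [SimpleGraph.Walk.support_cons, hx])) hc hb)

private lemma exists_noncut_s2 [Fintype V] (G : SimpleGraph V) (W S : Set V)
    (hSW : S ⊆ W) (hS : (G.induce S).Connected)
    (hW : (G.induce W).Connected) (hne : (W \ S).Nonempty) :
    ∃ v ∈ W \ S, (G.induce (W \ {v})).Connected := by
  classical
  obtain ⟨s₀⟩ := hS.nonempty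
  set H := G.induce W with hH
  set T : Set ↥W := {u : ↥W | (u : V) ∈ S} with hT
  have hTne : T.Nonempty := ⟨⟨(s₀ : V), hSW s₀.2⟩, s₀.2⟩
  set f : ↥W → ℕ := fun u => sInf ((fun s : ↥W => H.dist u s) '' T) with hf
  have hfle : ∀ (u s : ↥W), (s : V) ∈ S → f u ≤ H.dist u s := by
    intro u s hs
    exact Nat.sInf_le ⟨s, hs, rfl⟩
  have hfmem : ∀ u : ↥W, ∃ s : ↥W, (s : V) ∈ S ∧ H.dist u s = f u := by
    intro u
    have := Nat.sInf_mem (hTne.image (fun s : ↥W => H.dist u s))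
    obtain ⟨s, hs, hval⟩ := this
    exact ⟨s, hs, hval⟩
  obtain ⟨w, hwW, hwS⟩ := hne
  obtain ⟨v, hv, hmax⟩ := Set.exists_max_image {u : ↥W | (u : V) ∉ S} f
    (Set.toFinite _) ⟨⟨w, hwW⟩, hwS⟩
  have hvS : (v : V) ∉ S := hv
  -- S lives inside W \ {v}
  have hSsub : S ⊆ W \ {(v : V)} := by
    intro y hy
    exact ⟨hSW hy, fun h => hvS ((Set.mem_singleton_iff.1 h) ▸ hy)⟩
  have hs₀mem : (s₀ : V) ∈ W \ {(v : V)} := hSsub s₀.2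
  -- reachability to s₀ for vertices of S
  have hreachS : ∀ (x : V) (hx : x ∈ S),
      (G.induce (W \ {(v : V)})).Reachable ⟨x, hSsub hx⟩ ⟨(s₀ : V), hs₀mem⟩ := by
    intro x hx
    have r : (G.induce S).Reachable ⟨x, hx⟩ s₀ := hS.preconnected _ _
    exact r.map (G.induceHomOfLE hSsub).toHom
  refine ⟨(v : V), ⟨v.2, hvS⟩, ?_⟩
  rw [connected_iff]
  have key : ∀ u : ↥(W \ {(v : V)}),
      (G.induce (W \ {(v : V)})).Reachable u ⟨(s₀ : V), hs₀mem⟩ := by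
    rintro ⟨u, huW, huv⟩
    have huv' : u ≠ (v : V) := huv
    by_cases huS : u ∈ S
    · exact hreachS u huS
    · obtain ⟨s, hsS, hdist⟩ := hfmem ⟨u, huW⟩
      obtain ⟨p, hplen⟩ :=
        (hW.preconnected ⟨u, huW⟩ s).exists_walk_length_eq_dist
      have hvsupp : v ∉ p.support := by
        intro hvp
        have h4 : (p.takeUntil v hvp).length + (p.dropUntil v hvp).length = p.length := by
          rw [← SimpleGraph.Walk.length_append, SimpleGraph.Walk.take_spec]
        have h1 : 1 ≤ (p.takeUntil v hvp).length := by
          by_contra hl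
          have h0 : (p.takeUntil v hvp).length = 0 := by omega
          have := SimpleGraph.Walk.eq_of_length_eq_zero h0
          exact huv' (congrArg Subtype.val this)
        have h2 : f v ≤ (p.dropUntil v hvp).length :=
          le_trans (hfle v s hsS) (SimpleGraph.dist_le _)
        have h3 : f ⟨u, huW⟩ ≤ f v := hmax ⟨u, huW⟩ huS
        omega
      have hnev : ∀ x ∈ p.support, (x : V) ≠ (v : V) := by
        intro x hx hxy
        exact hvsupp (by rwa [Subtype.ext hxy] at hx)
      have hsv : (s : V) ∈ W \ {(v : V)} := hSsub hsS
      exact (reach_avoid p hnev ⟨huW, huv⟩ hsv).trans (hreachS (s : V) hsS)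
  exact ⟨fun x y => (key x).trans (key y).symm, ⟨⟨(s₀ : V), hs₀mem⟩⟩⟩

private lemma induce_singleton_connected (G : SimpleGraph V) (x : V) :
    (G.induce ({x} : Set V)).Connected := by
  rw [connected_iff]
  refine ⟨?_, ⟨⟨x, rfl⟩⟩⟩
  rintro ⟨a, ha⟩ ⟨b, hb⟩
  simp only [Set.mem_singleton_iff] at ha hb
  subst ha; subst hb
  exact Reachable.refl _

/-- If `Q` is a nonempty connected vertex set, `t ∈ N(Q)`, and `V' ⊊ Q` with either
`V' = ∅` or `G[V']` connected and `t` adjacent to some vertex of `V'`, then some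
vertex of `Q \ V'` is not a cut vertex of `G[Q ∪ {t}]`. -/
theorem stmt2 [Fintype V] (G : SimpleGraph V) (hG : G.Connected)
    (Q : Finset V) (hQne : Q.Nonempty) (hQconn : ConnSet G Q)
    (t : V) (htQ : t ∉ Q) (htadj : ∃ q ∈ Q, G.Adj q t)
    (V' : Finset V) (hV' : V' ⊂ Q)
    (halt : V' = ∅ ∨
      ((G.induce (V' : Set V)).Connected ∧ ∃ x ∈ V', G.Adj t x)) :
    ∃ v ∈ Q, v ∉ V' ∧ ¬ IsCutVertex G (insert t (Q : Set V)) v := by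
  classical
  obtain ⟨q, hqQ, hqt⟩ := htadj
  set W : Set V := insert t (Q : Set V) with hWdef
  set S : Set V := insert t (V' : Set V) with hSdef
  have hWconn : (G.induce W).Connected := by
    have := connected_induce_union (G := G) (Connected.preconnected hQconn)
      (induce_singleton_connected G t).preconnected hqQ rfl hqt
    rwa [Set.union_singleton] at this
  have hSconn : (G.induce S).Connected := by
    rcases halt with h | ⟨hconn, x, hxV', hadj⟩
    · have : S = {t} := by simp [hSdef, h]
      rw [this]; exact induce_singleton_connected G t
    · have := connected_induce_union (G := G) hconn.preconnected
        (induce_singleton_connected G t).preconnected hxV' rfl hadj.symm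
      rwa [Set.union_singleton] at this
  have hSW : S ⊆ W := Set.insert_subset_insert (by exact_mod_cast hV'.subset)
  obtain ⟨w, hwQ, hwV'⟩ := Finset.exists_of_ssubset hV'
  have hne : (W \ S).Nonempty := by
    refine ⟨w, Set.mem_insert_iff.2 (Or.inr (by exact_mod_cast hwQ)), ?_⟩
    intro hw
    rcases Set.mem_insert_iff.1 hw with h | h
    · exact htQ (h ▸ hwQ)
    · exact hwV' (by exact_mod_cast h)
  obtain ⟨v, ⟨hvW, hvS⟩, hconn⟩ := exists_noncut_s2 G W S hSW hSconn hWconn hne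
  have hvt : v ≠ t := fun h => hvS (h ▸ Set.mem_insert t _)
  have hvQ : v ∈ Q := by
    rcases Set.mem_insert_iff.1 hvW with h | h
    · exact absurd h hvt
    · exact_mod_cast h
  refine ⟨v, hvQ, fun h => hvS (Set.mem_insert_iff.2 (Or.inr (by exact_mod_cast h))), ?_⟩
  rintro ⟨-, -, h3⟩
  exact h3 hconn
end

section
/- Let G = (V,E) be a finite, simple, undirected, connected graph, let Q ⊆ V be a nonempty connected vertex set, and let t ∈ N(Q). Then there exists a sequence of pairwise distinct vertices v_0, v_1, …, v_m (m ≥ 1) with consecutive vertices adjacent in G, such that v_m = t, v_i ∈ Q for every 0 ≤ i < m, the vertex set Q' = (Q \ {v_0}) ∪ {t} is connected, and Q' is reachable from Q in one step via the bijection φ : Q → Q' that sends v_i to v_{i+1} for 0 ≤ i < m and fixes every other vertex of Q. -/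
open SimpleGraph

variable {V : Type*}

private lemma getVert_injOn' {G : SimpleGraph V} {u v : V} (p : G.Walk u v) (hp : p.IsPath) :
    ∀ i j : ℕ, i ≤ p.length → j ≤ p.length → p.getVert i = p.getVert j → i = j := by
  induction p with
  | nil => intro i j hi hj _; simp at hi hj; omega
  | @cons a b c h q ih =>
    rw [Walk.cons_isPath_iff] at hp
    intro i j hi hj hij
    rw [Walk.length_cons] at hi hj
    match i, j with
    | 0, 0 => rfl
    | 0, j+1 =>
      exfalso
      apply hp.2
      rw [Walk.mem_support_iff_exists_getVert]
      refine ⟨j, ?_, by omega⟩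
      simp only [Walk.getVert_cons_succ] at hij
      simpa [Walk.getVert_zero] using hij.symm
    | i+1, 0 =>
      exfalso
      apply hp.2
      rw [Walk.mem_support_iff_exists_getVert]
      refine ⟨i, ?_, by omega⟩
      simp only [Walk.getVert_cons_succ] at hij
      simpa [Walk.getVert_zero] using hij
    | i+1, j+1 =>
      simp only [Walk.getVert_cons_succ] at hij
      have := ih hp.1 i j (by omega) (by omega) hij
      omega

private lemma phi_lemma [DecidableEq V] (Q : Finset V)
    (t : V) (htQ : t ∉ Q) (m : ℕ) (hm : 1 ≤ m) (v : Fin (m + 1) → V)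
    (hvinj : Function.Injective v)
    (hlast : v (Fin.last m) = t)
    (hvQ : ∀ i : Fin m, v i.castSucc ∈ Q) :
    ∃ φ : {x // x ∈ Q} ≃ {x // x ∈ insert t (Q.erase (v 0))},
      (∀ (i : Fin m) (x : {x // x ∈ Q}), (x : V) = v i.castSucc → (φ x : V) = v i.succ) ∧
      (∀ x : {x // x ∈ Q}, (∀ i : Fin m, (x : V) ≠ v i.castSucc) → (φ x : V) = (x : V)) := by
  classical
  have hc0 : (⟨0, hm⟩ : Fin m).castSucc = (0 : Fin (m + 1)) := by
    apply Fin.ext; simp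
  have h0Q : v 0 ∈ Q := hc0 ▸ hvQ ⟨0, hm⟩
  have hsucc_mem : ∀ i : Fin m, v i.succ ∈ insert t (Q.erase (v 0)) := by
    intro i
    by_cases hi : (i : ℕ) + 1 = m
    · have hl : i.succ = Fin.last m := by apply Fin.ext; simp [hi]
      rw [hl, hlast]
      exact Finset.mem_insert_self _ _
    · have hlt : (i : ℕ) + 1 < m := lt_of_le_of_ne i.isLt hi
      have hcs : i.succ = (⟨(i : ℕ) + 1, hlt⟩ : Fin m).castSucc := by apply Fin.ext; simp
      apply Finset.mem_insert_of_mem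
      refine Finset.mem_erase.2 ⟨?_, by rw [hcs]; exact hvQ _⟩
      intro h0
      exact Fin.succ_ne_zero i (hvinj h0)
  let f : {x // x ∈ Q} → {x // x ∈ insert t (Q.erase (v 0))} := fun x =>
    if h : ∃ i : Fin m, (x : V) = v i.castSucc then ⟨v h.choose.succ, hsucc_mem h.choose⟩
    else ⟨(x : V), by
      refine Finset.mem_insert_of_mem (Finset.mem_erase.2 ⟨?_, x.2⟩)
      intro h0
      exact h ⟨⟨0, hm⟩, by rw [h0, hc0]⟩⟩
  have hfeq : ∀ (x : {x // x ∈ Q}) (i : Fin m), (x : V) = v i.castSucc → ((f x : V) = v i.succ) := by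
    intro x i hx
    have h : ∃ i : Fin m, (x : V) = v i.castSucc := ⟨i, hx⟩
    have hch : h.choose = i := by
      have h2 : v h.choose.castSucc = v i.castSucc := by rw [← h.choose_spec, hx]
      exact Fin.castSucc_injective m (hvinj h2)
    simp only [f, dif_pos h, hch]
  have hffix : ∀ x : {x // x ∈ Q}, (∀ i : Fin m, (x : V) ≠ v i.castSucc) → (f x : V) = x := by
    intro x hx
    have h : ¬∃ i : Fin m, (x : V) = v i.castSucc := by push_neg; exact hx
    simp only [f, dif_neg h]
  have hnot : ∀ (x : {x // x ∈ Q}) (i : Fin m),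
      (∀ j : Fin m, (x : V) ≠ v j.castSucc) → (x : V) ≠ v i.succ := by
    intro x i hx h
    by_cases hi1 : (i : ℕ) + 1 = m
    · have hl : i.succ = Fin.last m := by apply Fin.ext; simp [hi1]
      rw [hl, hlast] at h
      exact htQ (h ▸ x.2)
    · have hlt : (i : ℕ) + 1 < m := lt_of_le_of_ne i.isLt hi1
      have hcs : i.succ = (⟨(i : ℕ) + 1, hlt⟩ : Fin m).castSucc := by apply Fin.ext; simp
      exact hx ⟨(i : ℕ) + 1, hlt⟩ (by rw [h, hcs])
  have hinj : Function.Injective f := by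
    intro x y hxy
    have hval : (f x : V) = (f y : V) := congrArg Subtype.val hxy
    by_cases hx : ∃ i : Fin m, (x : V) = v i.castSucc
    · obtain ⟨i, hi⟩ := hx
      rw [hfeq x i hi] at hval
      by_cases hy : ∃ j : Fin m, (y : V) = v j.castSucc
      · obtain ⟨j, hj⟩ := hy
        rw [hfeq y j hj] at hval
        have hij : i = j := Fin.succ_injective _ (hvinj hval)
        exact Subtype.ext (by rw [hi, hj, hij])
      · push_neg at hy
        rw [hffix y hy] at hval
        exact absurd hval.symm (hnot y i hy)
    · push_neg at hx
      rw [hffix x hx] at hval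
      by_cases hy : ∃ j : Fin m, (y : V) = v j.castSucc
      · obtain ⟨j, hj⟩ := hy
        rw [hfeq y j hj] at hval
        exact absurd hval (hnot x j hx)
      · push_neg at hy
        rw [hffix y hy] at hval
        exact Subtype.ext hval
  have hcard : Fintype.card {x // x ∈ Q} = Fintype.card {x // x ∈ insert t (Q.erase (v 0))} := by
    simp only [Fintype.card_coe]
    rw [Finset.card_insert_of_notMem (fun h => htQ (Finset.mem_of_mem_erase h)),
      Finset.card_erase_of_mem h0Q]
    have : 0 < Q.card := Finset.card_pos.2 ⟨_, h0Q⟩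
    omega
  have hbij : Function.Bijective f := (Fintype.bijective_iff_injective_and_card f).2 ⟨hinj, hcard⟩
  exact ⟨Equiv.ofBijective f hbij, fun i x hx => hfeq x i hx, hffix⟩

/-- If `Q` is a nonempty connected vertex set and `t ∈ N(Q)`, then there is a
sequence of pairwise distinct vertices `v 0, …, v m` (`m ≥ 1`), consecutive ones
adjacent, ending at `t`, all but the last lying in `Q`, such that
`Q' = (Q \ {v 0}) ∪ {t}` is connected and is reachable from `Q` in one step via
the bijection sending `v i ↦ v (i+1)` and fixing all other vertices of `Q`. -/
theorem stmt7 [Fintype V] [DecidableEq V] (G : SimpleGraph V) (hG : G.Connected)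
    (Q : Finset V) (hQne : Q.Nonempty) (hQconn : ConnSet G Q)
    (t : V) (htQ : t ∉ Q) (htadj : ∃ q ∈ Q, G.Adj q t) :
    ∃ (m : ℕ) (v : Fin (m + 1) → V), 1 ≤ m ∧
      Function.Injective v ∧
      (∀ i : Fin m, G.Adj (v i.castSucc) (v i.succ)) ∧
      v (Fin.last m) = t ∧
      (∀ i : Fin m, v i.castSucc ∈ Q) ∧
      ConnSet G (insert t (Q.erase (v 0))) ∧
      ∃ φ : {x // x ∈ Q} ≃ {x // x ∈ insert t (Q.erase (v 0))},
        (∀ x : {x // x ∈ Q}, ((φ x : V) = (x : V)) ∨ G.Adj (x : V) ((φ x : V))) ∧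
        (∀ x y : {x // x ∈ Q}, (x : V) ≠ (y : V) →
          ¬(((φ x : V) = (y : V)) ∧ ((φ y : V) = (x : V)))) ∧
        (∀ (i : Fin m) (x : {x // x ∈ Q}), (x : V) = v i.castSucc →
          (φ x : V) = v i.succ) ∧
        (∀ x : {x // x ∈ Q}, (∀ i : Fin m, (x : V) ≠ v i.castSucc) →
          (φ x : V) = (x : V)) := by
  classical
  obtain ⟨q, hqQ, hqt⟩ := htadj
  set Qs : Set V := (Q : Set V) with hQsdef
  have hH : (G.induce Qs).Connected := hQconn
  have hqQs : q ∈ Qs := hqQ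
  set qq : Qs := ⟨q, hqQs⟩ with hqqdef
  obtain ⟨v0, -, hmax⟩ := Finset.exists_max_image Finset.univ
    (fun x : Qs => (G.induce Qs).dist x qq) ⟨qq, Finset.mem_univ _⟩
  obtain ⟨p0, hp0path, hp0len⟩ := hH.exists_path_of_dist v0 qq
  let emb : G.induce Qs ↪g G := SimpleGraph.Embedding.induce Qs
  have hembinj : Function.Injective (emb.toHom : Qs → V) := fun a b hab => Subtype.val_injective hab
  let pg : G.Walk (v0 : V) q := p0.map emb.toHom
  have hpgpath : pg.IsPath := Walk.map_isPath_of_injective hembinj hp0path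
  have hpgsup : ∀ y ∈ pg.support, y ∈ Q := by
    intro y hy
    change y ∈ (p0.map emb.toHom).support at hy
    rw [Walk.support_map, List.mem_map] at hy
    obtain ⟨z, hz, rfl⟩ := hy
    exact z.2
  -- the full walk
  let pw : G.Walk (v0 : V) t := pg.append (Walk.cons hqt Walk.nil)
  have hlenpw : pw.length = pg.length + 1 := by
    simp [pw, Walk.length_append]
  have hpwsup : pw.support = pg.support ++ [t] := by
    simp [pw, Walk.support_append]
  have htpg : t ∉ pg.support := fun h => htQ (hpgsup t h)
  have hpwpath : pw.IsPath := by
    rw [Walk.isPath_def, hpwsup]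
    simp [List.nodup_append, hpgpath.support_nodup, htpg]
    exact fun a ha h => htpg (h ▸ ha)
  set m : ℕ := pg.length + 1 with hmdef
  have hm : 1 ≤ m := by omega
  have hlen' : pw.length = m := hlenpw
  set v : Fin (m + 1) → V := fun i => pw.getVert i with hvdef
  have hvinj : Function.Injective v := by
    intro i j hij
    apply Fin.ext
    exact getVert_injOn' pw hpwpath i j (by omega) (by omega) hij
  have hadj : ∀ i : Fin m, G.Adj (v i.castSucc) (v i.succ) := by
    intro i
    have h1 : ((i.castSucc : Fin (m + 1)) : ℕ) = (i : ℕ) := rfl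
    have h2 : ((i.succ : Fin (m + 1)) : ℕ) = (i : ℕ) + 1 := rfl
    simp only [hvdef, h1, h2]
    exact pw.adj_getVert_succ (by omega)
  have hlast : v (Fin.last m) = t := by
    have : ((Fin.last m : Fin (m + 1)) : ℕ) = pw.length := by rw [Fin.val_last]; omega
    simp only [hvdef, this]
    exact pw.getVert_length
  have hvQ : ∀ i : Fin m, v i.castSucc ∈ Q := by
    intro i
    have hiv : v i.castSucc ∈ pw.support :=
      Walk.mem_support_iff_exists_getVert.2 ⟨i, rfl, by omega⟩
    rw [hpwsup, List.mem_append] at hiv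
    rcases hiv with h | h
    · exact hpgsup _ h
    · exfalso
      simp only [List.mem_singleton] at h
      have ht' : v i.castSucc = pw.getVert pw.length := by rw [h, pw.getVert_length]
      have := getVert_injOn' pw hpwpath i pw.length (by omega) le_rfl ht'
      omega
  have hv00 : v 0 = (v0 : V) := pw.getVert_zero
  -- key walk avoiding v0
  have hkey : ∀ x, x ∈ Q → x ≠ (v0 : V) →
      ∃ w : G.Walk x q, ∀ y ∈ w.support, y ∈ Q ∧ y ≠ (v0 : V) := by
    intro x hxQ hxne
    have hxQs : x ∈ Qs := hxQ
    obtain ⟨px, hpxpath, hpxlen⟩ := hH.exists_path_of_dist ⟨x, hxQs⟩ qq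
    have hv0 : v0 ∉ px.support := by
      intro hmem
      have hsplit : (px.takeUntil v0 hmem).length + (px.dropUntil v0 hmem).length = px.length := by
        rw [← Walk.length_append, Walk.take_spec]
      have d1 : (G.induce Qs).dist ⟨x, hxQs⟩ v0 ≤ (px.takeUntil v0 hmem).length :=
        SimpleGraph.dist_le _
      have d2 : (G.induce Qs).dist v0 qq ≤ (px.dropUntil v0 hmem).length :=
        SimpleGraph.dist_le _
      have dpos : 0 < (G.induce Qs).dist ⟨x, hxQs⟩ v0 :=
        Reachable.pos_dist_of_ne (hH.preconnected _ _)
          (fun h => hxne (congrArg Subtype.val h))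
      have hmax' : (G.induce Qs).dist ⟨x, hxQs⟩ qq ≤ (G.induce Qs).dist v0 qq :=
        hmax _ (Finset.mem_univ _)
      omega
    refine ⟨px.map emb.toHom, ?_⟩
    intro y hy
    change y ∈ (px.map emb.toHom).support at hy
    rw [Walk.support_map, List.mem_map] at hy
    obtain ⟨z, hz, rfl⟩ := hy
    exact ⟨z.2, fun h => hv0 (by rwa [Subtype.val_injective (a₁ := z) (a₂ := v0) h] at hz)⟩
  -- connectivity of Q'
  have hconn2 : (G.induce ((insert t (Q.erase (v 0)) : Finset V) : Set V)).Connected := by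
    apply SimpleGraph.induce_connected_of_patches t (by simp)
    intro x hx
    simp only [Finset.coe_insert, Set.mem_insert_iff, Finset.coe_erase, Set.mem_diff,
      Finset.mem_coe, Set.mem_singleton_iff] at hx
    rcases hx with rfl | ⟨hxQ, hxne⟩
    · exact ⟨{x}, by simp, rfl, rfl, Reachable.refl _⟩
    · obtain ⟨w, hw⟩ := hkey x hxQ (by rwa [hv00] at hxne)
      let w2 : G.Walk t x := Walk.cons hqt.symm w.reverse
      refine ⟨{y | y ∈ w2.support}, ?_, w2.start_mem_support, w2.end_mem_support, ?_⟩
      · intro y hy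
        simp only [w2, Walk.support_cons, List.mem_cons, Walk.support_reverse,
          List.mem_reverse, Set.mem_setOf_eq] at hy
        rcases hy with rfl | hy
        · simp
        · have := hw y hy
          simp only [Finset.coe_insert, Set.mem_insert_iff, Finset.coe_erase, Set.mem_diff,
            Finset.mem_coe, Set.mem_singleton_iff]
          right
          exact ⟨this.1, by rw [hv00]; exact this.2⟩
      · exact (w2.connected_induce_support).preconnected _ _
  obtain ⟨φ, hφeq, hφfix⟩ := phi_lemma Q t htQ m hm v hvinj hlast hvQ
  refine ⟨m, v, hm, hvinj, hadj, hlast, hvQ, hconn2, φ, ?_, ?_, hφeq, hφfix⟩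
  · intro x
    by_cases hx : ∃ i : Fin m, (x : V) = v i.castSucc
    · obtain ⟨i, hi⟩ := hx
      right
      rw [hφeq i x hi, hi]
      exact hadj i
    · push_neg at hx
      left
      exact hφfix x hx
  · intro x y hne hcontra
    obtain ⟨h1, h2⟩ := hcontra
    by_cases hx : ∃ i : Fin m, (x : V) = v i.castSucc
    · obtain ⟨i, hi⟩ := hx
      by_cases hy : ∃ j : Fin m, (y : V) = v j.castSucc
      · obtain ⟨j, hj⟩ := hy
        rw [hφeq i x hi] at h1
        rw [hφeq j y hj] at h2
        have e1 : i.succ = j.castSucc := hvinj (h1.trans hj)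
        have e2 : j.succ = i.castSucc := hvinj (h2.trans hi)
        have e1' : (i : ℕ) + 1 = (j : ℕ) := congrArg Fin.val e1
        have e2' : (j : ℕ) + 1 = (i : ℕ) := congrArg Fin.val e2
        omega
      · push_neg at hy
        rw [hφfix y hy] at h2
        exact hne h2.symm
    · push_neg at hx
      rw [hφfix x hx] at h1
      exact hne h1
end

section
/- Let G = (V,E) be a finite, simple, undirected, connected graph, and let Q, T ⊆ V be connected vertex sets with |Q| = |T| = n and Q ∩ T = ∅. Then there exists a connected vertex set Q' ⊆ V with |Q'| = n that is reachable from Q in one step and satisfies min_{(s,t)∈Q'×T} dist(s,t) = min_{(s,t)∈Q×T} dist(s,t) − 1. -/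
open SimpleGraph

variable {V : Type*}

/-- `min_{(a,b) ∈ A × B} dist(a,b)`. -/
noncomputable def setDist (G : SimpleGraph V) (A B : Finset V) : ℕ :=
  sInf {d | ∃ a ∈ A, ∃ b ∈ B, G.dist a b = d}

private lemma reach_induce {G : SimpleGraph V} {S : Set V} {u v : V}
    (p : G.Walk u v) (hp : ∀ x ∈ p.support, x ∈ S) (hu : u ∈ S) (hv : v ∈ S) :
    (G.induce S).Reachable ⟨u, hu⟩ ⟨v, hv⟩ := by
  induction p with
  | nil => exact Reachable.refl _
  | @cons a b c h q ih =>
    have hb : b ∈ S := hp _ (by simp)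
    exact (Adj.reachable (u := (⟨a, hu⟩ : S)) (v := ⟨b, hb⟩) h).trans
      (ih (fun x hx => hp x (by simp [hx])) hb hv)

/-- If `Q` and `T` are disjoint connected vertex sets of size `n`, there is a
connected vertex set `Q'` of size `n`, reachable from `Q` in one step, whose
distance to `T` is exactly one less than that of `Q`. -/
theorem stmt8 [Fintype V] [DecidableEq V] (G : SimpleGraph V) (hG : G.Connected)
    (n : ℕ) (Q T : Finset V)
    (hQconn : ConnSet G Q) (hTconn : ConnSet G T)
    (hQcard : Q.card = n) (hTcard : T.card = n)
    (hdisj : Q ∩ T = ∅) :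
    ∃ Q' : Finset V, Q'.card = n ∧ ConnSet G Q' ∧ OneStep G Q Q' ∧
      setDist G Q' T = setDist G Q T - 1 := by
  classical
  obtain ⟨⟨q0, hq0⟩⟩ := hQconn.nonempty
  obtain ⟨⟨t0, ht0⟩⟩ := hTconn.nonempty
  set d := setDist G Q T with hd
  have hdmem : d ∈ {m | ∃ a ∈ Q, ∃ b ∈ T, G.dist a b = m} :=
    Nat.sInf_mem ⟨_, ⟨q0, hq0, t0, ht0, rfl⟩⟩
  obtain ⟨q, hqQ, t, htT, hqt⟩ := hdmem
  have hlb : ∀ a ∈ Q, ∀ b ∈ T, d ≤ G.dist a b :=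
    fun a ha b hb => Nat.sInf_le ⟨a, ha, b, hb, rfl⟩
  have hd1 : 1 ≤ d := by
    rcases Nat.eq_zero_or_pos d with h0 | h
    · exfalso
      have hqt0 : G.dist q t = 0 := by omega
      have hqe : q = t := (hG.dist_eq_zero_iff).mp hqt0
      have : q ∈ Q ∩ T := Finset.mem_inter.mpr ⟨hqQ, hqe ▸ htT⟩
      simp [hdisj] at this
    · exact h
  obtain ⟨p, hpl⟩ := hG.exists_walk_length_eq_dist q t
  set w := p.getVert 1 with hwdef
  have hplen : 0 < p.length := by omega
  have haqw : G.Adj q w := by simpa using p.adj_getVert_succ hplen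
  have hwt : G.dist w t = d - 1 := by
    have hnil : ¬ p.Nil := Walk.not_nil_iff_lt_length.mpr hplen
    have h1 : G.dist w t ≤ p.tail.length := dist_le p.tail
    have h2 := Walk.length_tail_add_one hnil
    have h3 := hG.dist_triangle (u := q) (v := w) (w := t)
    have h4 : G.dist q w ≤ 1 := by simpa using dist_le haqw.toWalk
    omega
  have hwQ : w ∉ Q := fun hwq => by have := hlb w hwq t htT; omega
  -- the induced graph on Q
  set H := G.induce (Q : Set V) with hH
  have hHconn : H.Connected := hQconn
  set q' : (Q : Set V) := ⟨q, hqQ⟩ with hq'def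
  obtain ⟨ℓ', -, hmax⟩ := Finset.exists_max_image Finset.univ
    (fun x : (Q : Set V) => H.dist q' x) ⟨q', Finset.mem_univ _⟩
  set ℓ : V := ℓ'.1 with hℓdef
  have hℓQ : ℓ ∈ Q := ℓ'.2
  -- shortest walks to q' avoid ℓ'
  have havoid : ∀ x : (Q : Set V), x ≠ ℓ' → ∃ px : H.Walk x q', ℓ' ∉ px.support := by
    intro x hx
    obtain ⟨px, hpxl⟩ := hHconn.exists_walk_length_eq_dist x q'
    refine ⟨px, fun hmem => ?_⟩
    have h1 : (px.takeUntil ℓ' hmem).length + (px.dropUntil ℓ' hmem).length = px.length := by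
      have h := congrArg Walk.length (px.take_spec hmem)
      rw [Walk.length_append] at h
      exact h
    have h2 : 1 ≤ (px.takeUntil ℓ' hmem).length := by
      rcases Nat.eq_zero_or_pos (px.takeUntil ℓ' hmem).length with h0 | h
      · exact absurd (Walk.eq_of_length_eq_zero h0) hx
      · exact h
    have h3 : H.dist ℓ' q' ≤ (px.dropUntil ℓ' hmem).length := dist_le _
    have h4 : H.dist q' x ≤ H.dist q' ℓ' := hmax x (Finset.mem_univ x)
    have h5 : H.dist q' x = H.dist x q' := dist_comm
    have h6 : H.dist q' ℓ' = H.dist ℓ' q' := dist_comm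
    omega
  -- a path from ℓ' to q' inside Q
  obtain ⟨pw0⟩ := hHconn ℓ' q'
  set pw := pw0.toPath with hpwdef
  set L0 : List V := pw.1.support.map Subtype.val with hL0def
  have hL0nd : L0.Nodup := pw.2.support_nodup.map Subtype.val_injective
  have hL0mem : ∀ x ∈ L0, x ∈ Q := by
    intro x hx
    obtain ⟨y, _, rfl⟩ := List.mem_map.mp hx
    exact y.2
  have hr : L0 = ℓ :: (pw.1.support.tail.map Subtype.val) := by
    rw [hL0def]
    conv_lhs => rw [pw.1.support_eq_cons]
    rfl
  have hL0ne : L0 ≠ [] := by rw [hr]; simp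
  have hL0last : L0.getLast? = some q := by
    rw [hL0def, List.getLast?_map,
      List.getLast?_eq_getLast_of_ne_nil pw.1.support_ne_nil, pw.1.getLast_support]
    rfl
  have hchainL0 : List.Chain' G.Adj L0 := by
    exact List.isChain_map_of_isChain Subtype.val (fun a b hab => hab) pw.1.isChain_adj_support
  set L : List V := L0 ++ [w] with hLdef
  have hLnd : L.Nodup := by
    rw [hLdef, List.nodup_append]
    exact ⟨hL0nd, List.nodup_singleton w, by
      intro x hx
      simp only [List.mem_singleton]
      exact fun b hb hxb => hwQ (by rw [← hb, ← hxb]; exact hL0mem x hx)⟩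
  have hchainL : List.Chain' G.Adj L := by
    rw [hLdef]
    show List.IsChain G.Adj (L0 ++ [w])
    rw [List.isChain_append]
    refine ⟨hchainL0, List.isChain_singleton w, ?_⟩
    intro x hx y hy
    rw [hL0last] at hx
    simp only [Option.mem_some_iff] at hx
    simp only [List.head?_cons, Option.mem_some_iff] at hy
    rw [← hx, ← hy]
    exact haqw
  have hLlen : L.length = L0.length + 1 := by simp [hLdef]
  have hL0len1 : 1 ≤ L0.length := by rw [hr]; simp
  have hLw : L[L0.length]'(by omega) = w := by
    simp [hLdef]
  have hLcons : L = ℓ :: (pw.1.support.tail.map Subtype.val ++ [w]) := by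
    rw [hLdef, hr]; rfl
  have hLzero : L[0]'(by omega) = ℓ := by
    simp only [hLcons, List.getElem_cons_zero]
  set σ : Equiv.Perm V := L.formPerm with hσdef
  set Q' : Finset V := insert w (Q.erase ℓ) with hQ'def
  have hmemQ' : ∀ x, x ∈ Q' ↔ (x = w ∨ (x ∈ Q ∧ x ≠ ℓ)) := by
    intro x
    simp only [hQ'def, Finset.mem_insert, Finset.mem_erase]
    tauto
  have hwQ' : w ∈ Q' := Finset.mem_insert_self _ _
  -- the key stepping lemma
  have hidx : ∀ x ∈ Q, ∀ i (hi : i < L.length), L[i] = x →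
      ∃ h : i + 1 < L.length, σ x = L[i+1]'h := by
    intro x hxQ i hi hix
    have hine : i ≠ L0.length := by
      intro h
      apply hwQ
      have hxw : x = w := by subst h; rw [← hix]; exact hLw
      exact hxw ▸ hxQ
    have hilt : i + 1 < L.length := by omega
    refine ⟨hilt, ?_⟩
    rw [← hix, hσdef]
    exact List.formPerm_apply_lt_getElem L hLnd i hilt
  have hstep : ∀ x ∈ Q, (σ x ∈ Q') ∧ (σ x = x ∨ G.Adj x (σ x)) := by
    intro x hxQ
    by_cases hxL : x ∈ L
    · obtain ⟨i, hi, hix⟩ := List.getElem_of_mem hxL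
      obtain ⟨hilt, hσx⟩ := hidx x hxQ i hi hix
      constructor
      · rw [hσx, hmemQ']
        by_cases h1 : i + 1 = L0.length
        · left; rw [← hLw]; congr 1
        · right
          have hi1 : i + 1 < L0.length := by omega
          have heq : L[i+1]'hilt = L0[i+1]'hi1 := List.getElem_append_left hi1
          have hmem : L[i+1]'hilt ∈ L0 := by
            rw [heq]; exact List.getElem_mem _
          refine ⟨hL0mem _ hmem, ?_⟩
          rw [← hLzero]
          intro hcontra
          have := (List.Nodup.getElem_inj_iff hLnd).mp hcontra
          omega
      · right
        rw [hσx, ← hix]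
        have := List.isChain_iff_getElem.mp hchainL i (by omega)
        simpa using this
    · have : σ x = x := List.formPerm_apply_of_notMem hxL
      refine ⟨?_, Or.inl this⟩
      rw [this, hmemQ']
      right
      refine ⟨hxQ, fun hxl => hxL ?_⟩
      rw [hxl, ← hLzero]
      exact List.getElem_mem _
  -- build the equivalence
  have hℓQ' : ℓ ∈ Q := hℓQ
  have hQ'card : Q'.card = n := by
    rw [hQ'def, Finset.card_insert_of_notMem (fun h => hwQ (Finset.mem_of_mem_erase h)),
      Finset.card_erase_of_mem hℓQ]
    have : 1 ≤ Q.card := Finset.card_pos.mpr ⟨q, hqQ⟩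
    omega
  let e : {x // x ∈ Q} → {x // x ∈ Q'} := fun x => ⟨σ x.1, (hstep x.1 x.2).1⟩
  have hinj : Function.Injective e := by
    intro a b hab
    have : σ a.1 = σ b.1 := congrArg Subtype.val hab
    exact Subtype.ext (σ.injective this)
  have hbij : Function.Bijective e := by
    rw [Fintype.bijective_iff_injective_and_card]
    refine ⟨hinj, ?_⟩
    simp only [Fintype.card_coe]
    rw [hQcard, hQ'card]
  set φ : {x // x ∈ Q} ≃ {x // x ∈ Q'} := Equiv.ofBijective e hbij with hφdef
  have hφval : ∀ v : {x // x ∈ Q}, (φ v : V) = σ v.1 := fun v => rfl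
  have honestep : OneStep G Q Q' := by
    refine ⟨φ, fun v => ?_, ?_⟩
    · rw [hφval]
      exact (hstep v.1 v.2).2
    · intro u v hne ⟨h1, h2⟩
      rw [hφval] at h1 h2
      by_cases huL : u.1 ∈ L
      · obtain ⟨i, hi, hix⟩ := List.getElem_of_mem huL
        obtain ⟨hilt, hσu⟩ := hidx u.1 u.2 i hi hix
        have hv : v.1 = L[i+1]'(by omega) := by rw [← h1, hσu]
        obtain ⟨hilt2, hσv⟩ := hidx v.1 v.2 (i+1) hilt hv.symm
        have : L[i]'hi = L[i+2]'(by omega) := by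
          rw [hix, ← h2, hσv]
        have := (List.Nodup.getElem_inj_iff hLnd).mp this
        omega
      · have : σ u.1 = u.1 := List.formPerm_apply_of_notMem huL
        exact hne (this.symm.trans h1)
  -- connectivity of Q'
  have hQ'conn : ConnSet G Q' := by
    rw [ConnSet, connected_iff]
    refine ⟨?_, ⟨⟨w, hwQ'⟩⟩⟩
    have hreach : ∀ a : (Q' : Set V), (G.induce (Q' : Set V)).Reachable a ⟨w, hwQ'⟩ := by
      rintro ⟨x, hx⟩
      have hx' : x = w ∨ (x ∈ Q ∧ x ≠ ℓ) := (hmemQ' x).mp hx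
      rcases hx' with rfl | ⟨hxQ, hxℓ⟩
      · exact Reachable.refl _
      · have hxne : (⟨x, hxQ⟩ : (Q : Set V)) ≠ ℓ' := fun h => hxℓ (congrArg Subtype.val h)
        obtain ⟨px, hpx⟩ := havoid ⟨x, hxQ⟩ hxne
        have hqne : q ≠ ℓ := by
          intro h
          apply hpx
          have hq'ℓ : q' = ℓ' := Subtype.ext h
          rw [← hq'ℓ]
          exact px.end_mem_support
        have hqQ' : q ∈ Q' := (hmemQ' q).mpr (Or.inr ⟨hqQ, hqne⟩)
        set pg := px.map (Embedding.induce (Q : Set V)).toHom with hpgdef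
        have hsup : ∀ y ∈ pg.support, y ∈ (Q' : Set V) := by
          intro y hy
          rw [hpgdef, Walk.support_map] at hy
          obtain ⟨y', hy', rfl⟩ := List.mem_map.mp hy
          have hyne : (y' : V) ≠ ℓ := by
            intro h
            exact hpx ((Subtype.ext h : y' = ℓ') ▸ hy')
          exact (hmemQ' _).mpr (Or.inr ⟨y'.2, hyne⟩)
        have h1 := reach_induce pg hsup (hsup _ pg.start_mem_support) (hsup _ pg.end_mem_support)
        have h2 : (G.induce (Q' : Set V)).Adj ⟨q, hqQ'⟩ ⟨w, hwQ'⟩ := haqw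
        exact h1.trans h2.reachable
    exact fun a b => (hreach a).trans (hreach b).symm
  -- the distance
  have hsd : setDist G Q' T = d - 1 := by
    apply le_antisymm
    · exact Nat.sInf_le ⟨w, hwQ', t, htT, hwt⟩
    · refine le_csInf ⟨d - 1, w, hwQ', t, htT, hwt⟩ ?_
      rintro m ⟨a, haQ', b, hbT, rfl⟩
      rcases (hmemQ' a).mp haQ' with ha | ⟨haQ, -⟩
      · have h1 := hlb q hqQ b hbT
        have h2 := hG.dist_triangle (u := q) (v := a) (w := b)
        have h3 : G.dist q a ≤ 1 := ha ▸ dist_le haqw.toWalk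
        omega
      · have := hlb a haQ b hbT; omega
  exact ⟨Q', hQ'card, hQ'conn, honestep, hsd⟩
end

section
/- Let G = (V,E) be a finite, simple, undirected, connected graph, and let Q, T ⊆ V be connected vertex sets with |Q| = |T| = n, Q ∩ T ≠ ∅, and Q ≠ T. Then there exists a connected vertex set Q' ⊆ V with |Q'| = n that is reachable from Q in one step and such that the number of vertices of a largest connected component of the induced subgraph G[Q' ∩ T] is at least one more than the number of vertices of a largest connected component of G[Q ∩ T]. -/
open SimpleGraph

variable {V : Type*}

/-- The number of vertices of a largest connected component of the induced
subgraph `G[W]`. -/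
noncomputable def maxCompCard (G : SimpleGraph V) (W : Finset V) : ℕ :=
  sSup (Set.range
    fun C : (G.induce (W : Set V)).ConnectedComponent => Nat.card C.supp)

section AuxStmt9

variable {G : SimpleGraph V}

/-- Adjacency relation restricted to a finset. -/
def relOnStmt9 (G : SimpleGraph V) (S : Finset V) (a b : V) : Prop :=
  a ∈ S ∧ b ∈ S ∧ G.Adj a b

/-- Connectivity of a finset, phrased via `ReflTransGen`. -/
def connOnStmt9 (G : SimpleGraph V) (S : Finset V) : Prop :=
  ∀ a ∈ S, ∀ b ∈ S, Relation.ReflTransGen (relOnStmt9 G S) a b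

lemma relOnStmt9_symm {S : Finset V} : Symmetric (relOnStmt9 G S) :=
  fun _ _ h => ⟨h.2.1, h.1, h.2.2.symm⟩

lemma relOnStmt9_mono {S S' : Finset V} (h : S ⊆ S') {a b : V} (hab : relOnStmt9 G S a b) :
    relOnStmt9 G S' a b := ⟨h hab.1, h hab.2.1, hab.2.2⟩

lemma rtg_toInduce {S : Finset V} {a b : V}
    (h : Relation.ReflTransGen (relOnStmt9 G S) a b) (ha : a ∈ S) (hb : b ∈ S) :
    (G.induce (S : Set V)).Reachable ⟨a, Finset.mem_coe.mpr ha⟩ ⟨b, Finset.mem_coe.mpr hb⟩ := by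
  revert hb
  induction h with
  | refl => exact fun _ => Reachable.refl _
  | @tail m b h1 h2 ih =>
    exact fun hb => (ih h2.1).trans (SimpleGraph.Adj.reachable (by exact h2.2.2))

lemma rtg_fromInduce {S : Finset V} {x y : ↥(S : Set V)}
    (h : (G.induce (S : Set V)).Reachable x y) :
    Relation.ReflTransGen (relOnStmt9 G S) x.val y.val :=
  Relation.ReflTransGen.lift Subtype.val
    (fun a b hab => ⟨Finset.mem_coe.mp a.2, Finset.mem_coe.mp b.2, hab⟩) _ _
    ((reachable_iff_reflTransGen _ _).mp h)

lemma connOnStmt9_iff {S : Finset V} (hS : S.Nonempty) : ConnSet G S ↔ connOnStmt9 G S := by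
  constructor
  · intro h a ha b hb
    exact rtg_fromInduce (h.preconnected ⟨a, Finset.mem_coe.mpr ha⟩ ⟨b, Finset.mem_coe.mpr hb⟩)
  · intro h
    obtain ⟨v, hv⟩ := hS
    haveI : Nonempty ↥(S : Set V) := ⟨⟨v, Finset.mem_coe.mpr hv⟩⟩
    refine Connected.mk ?_
    rintro ⟨x, hx⟩ ⟨y, hy⟩
    exact rtg_toInduce (h x (Finset.mem_coe.mp hx) y (Finset.mem_coe.mp hy))
      (Finset.mem_coe.mp hx) (Finset.mem_coe.mp hy)

lemma connOnStmt9_insert [DecidableEq V] {S : Finset V} (hS : connOnStmt9 G S) {c w : V}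
    (hc : c ∈ S) (hadj : G.Adj c w) : connOnStmt9 G (insert w S) := by
  have key : ∀ a ∈ insert w S, Relation.ReflTransGen (relOnStmt9 G (insert w S)) a c := by
    intro a ha
    rcases Finset.mem_insert.mp ha with rfl | haS
    · exact Relation.ReflTransGen.single
        ⟨Finset.mem_insert_self _ _, Finset.mem_insert_of_mem hc, hadj.symm⟩
    · exact Relation.ReflTransGen.mono (fun x y h => relOnStmt9_mono (Finset.subset_insert _ _) h) _ _ (hS a haS c hc)
  intro a ha b hb
  exact (key a ha).trans (by haveI : Std.Symm (relOnStmt9 G (insert w S)) := ⟨fun _ _ h => relOnStmt9_symm h⟩; exact Std.Symm.symm _ _ (key b hb))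

lemma exists_exit_stmt9 {S C : Finset V} {a b : V}
    (h : Relation.ReflTransGen (relOnStmt9 G S) a b) (ha : a ∈ C) (hb : b ∉ C) :
    ∃ x ∈ S, x ∉ C ∧ ∃ c ∈ C, G.Adj c x := by
  revert hb
  induction h with
  | refl => exact fun hb => absurd ha hb
  | @tail m b h1 h2 ih =>
    intro hb
    by_cases hm : m ∈ C
    · exact ⟨b, h2.2.1, hb, m, hm, h2.2.2⟩
    · exact ih hm

lemma rtg_restrict_stmt9 {S C : Finset V}
    (hclosed : ∀ x y, x ∈ C → relOnStmt9 G S x y → y ∈ C) {a b : V}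
    (h : Relation.ReflTransGen (relOnStmt9 G S) a b) (ha : a ∈ C) :
    Relation.ReflTransGen (relOnStmt9 G C) a b := by
  revert ha
  induction h using Relation.ReflTransGen.head_induction_on with
  | refl => exact fun _ => Relation.ReflTransGen.refl
  | head h' hrest ih =>
    intro haC
    have hc := hclosed _ _ haC h'
    exact Relation.ReflTransGen.head ⟨haC, hc, h'.2.2⟩ (ih hc)

lemma exists_removable_aux_stmt9 [DecidableEq V] : ∀ (k : ℕ) (S C : Finset V), C ⊆ S →
    C.Nonempty → connOnStmt9 G C → connOnStmt9 G S → C ≠ S → S.card - C.card ≤ k →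
    ∃ u ∈ S, u ∉ C ∧ connOnStmt9 G (S.erase u) := by
  intro k
  induction k with
  | zero =>
    intro S C hCS hCne hCconn hSconn hne hk
    have : C ⊂ S := Finset.ssubset_iff_subset_ne.mpr ⟨hCS, hne⟩
    have := Finset.card_lt_card this
    omega
  | succ k ih =>
    intro S C hCS hCne hCconn hSconn hne hk
    obtain ⟨b, hbS, hbC⟩ : ∃ b ∈ S, b ∉ C := by
      by_contra h
      push_neg at h
      exact hne (Finset.Subset.antisymm hCS (fun x hx => h x hx))
    obtain ⟨a, haC⟩ := hCne
    obtain ⟨x, hxS, hxC, c', hc'C, hadj⟩ :=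
      exists_exit_stmt9 (hSconn a (hCS haC) b hbS) haC hbC
    by_cases hC' : insert x C = S
    · refine ⟨x, hxS, hxC, ?_⟩
      have herase : S.erase x = C := by
        rw [← hC', Finset.erase_insert hxC]
      rw [herase]; exact hCconn
    · have hsub : insert x C ⊆ S := Finset.insert_subset hxS hCS
      have hcard : S.card - (insert x C).card ≤ k := by
        rw [Finset.card_insert_of_notMem hxC]
        have : C.card < S.card :=
          Finset.card_lt_card (Finset.ssubset_iff_subset_ne.mpr ⟨hCS, hne⟩)
        omega
      obtain ⟨u, huS, huC', hconn⟩ := ih S (insert x C) hsub ⟨x, Finset.mem_insert_self _ _⟩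
        (connOnStmt9_insert hCconn hc'C hadj) hSconn hC' hcard
      exact ⟨u, huS, fun h => huC' (Finset.mem_insert_of_mem h), hconn⟩

lemma exists_removable_stmt9 [DecidableEq V] {S C : Finset V} (hCS : C ⊆ S) (hCne : C.Nonempty)
    (hCconn : connOnStmt9 G C) (hSconn : connOnStmt9 G S) (hne : C ≠ S) :
    ∃ u ∈ S, u ∉ C ∧ connOnStmt9 G (S.erase u) :=
  exists_removable_aux_stmt9 (S.card - C.card) S C hCS hCne hCconn hSconn hne le_rfl

lemma getElem_congr_idx_stmt9 {α : Type*} {L : List α} {i j : ℕ} (h : i = j)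
    (hi : i < L.length) : L[i] = L[j]'(h ▸ hi) := by subst h; rfl

lemma onestep_move_stmt9 [DecidableEq V] {Q : Finset V} {u c w : V}
    (hu : u ∈ Q) (hc : c ∈ Q) (hw : w ∉ Q)
    (hreach : Relation.ReflTransGen (relOnStmt9 G Q) u c) (hadj : G.Adj c w) :
    OneStep G Q (insert w (Q.erase u)) := by
  classical
  obtain ⟨p0⟩ := rtg_toInduce hreach hu hc
  set pw := p0.toPath.1 with hpw
  have hnd0 : pw.support.Nodup := p0.toPath.2.support_nodup
  set l : List V := pw.support.map Subtype.val with hl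
  have hlnd : l.Nodup := hnd0.map Subtype.val_injective
  have hlpos : 0 < l.length := by
    rw [hl, List.length_map]
    exact List.length_pos_iff.mpr (Walk.support_ne_nil pw)
  have hlne : l ≠ [] := List.ne_nil_of_length_pos hlpos
  have hlQ : ∀ x ∈ l, x ∈ Q := by
    intro x hx
    rw [hl, List.mem_map] at hx
    obtain ⟨⟨y, hy⟩, _, rfl⟩ := hx
    exact Finset.mem_coe.mp hy
  have hwl : w ∉ l := fun h => hw (hlQ w h)
  have hslen : pw.support.length = l.length := by rw [hl, List.length_map]
  have hhead : l[0]'hlpos = u := by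
    have h0 : pw.support[0]'(by omega) = ⟨u, Finset.mem_coe.mpr hu⟩ :=
      (List.getElem_zero _).trans (Walk.head_support pw)
    calc l[0]'hlpos = (pw.support[0]'(by omega)).val := by
          exact List.getElem_map _
      _ = u := by rw [h0]
  have hlast : l[l.length - 1]'(by omega) = c := by
    have h0 : pw.support[pw.support.length - 1]'(by omega) = ⟨c, Finset.mem_coe.mpr hc⟩ := by
      rw [← List.getLast_eq_getElem]
      exact Walk.getLast_support pw
    calc l[l.length - 1]'(by omega)
        = (pw.support[l.length - 1]'(by omega)).val := by
          exact List.getElem_map _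
      _ = (pw.support[pw.support.length - 1]'(by omega)).val := by
          congr 1
          exact getElem_congr_idx_stmt9 (by omega) (by omega)
      _ = c := by rw [h0]
  have hlchain : List.IsChain G.Adj l := by
    have := Walk.isChain_adj_support pw
    rw [hl, List.isChain_map]
    exact this.imp (fun a b hab => hab)
  set L : List V := l ++ [w] with hL
  have hLlen : L.length = l.length + 1 := by simp [hL]
  have hLnd : L.Nodup := by
    rw [hL, List.nodup_append]
    exact ⟨hlnd, List.nodup_singleton w, by simpa using fun a ha (h : a = w) => hwl (h ▸ ha)⟩
  have hLl : ∀ (i : ℕ) (h : i < l.length), L[i]'(by omega) = l[i]'h := by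
    intro i h
    exact List.getElem_append_left h
  have hLw : L[l.length]'(by omega) = w := by simp [hL]
  have hLchain : ∀ (i : ℕ) (h : i + 1 < L.length), G.Adj (L[i]'(by omega)) (L[i+1]'h) := by
    have hch : List.IsChain G.Adj L := by
      rw [hL, List.isChain_append]
      refine ⟨hlchain, List.isChain_singleton w, ?_⟩
      intro x hx y hy
      rw [List.getLast?_eq_getLast hlne] at hx
      simp only [Option.mem_def, Option.some.injEq] at hx
      simp only [List.head?_cons, Option.mem_def, Option.some.injEq] at hy
      subst hx; subst hy
      rw [List.getLast_eq_getElem, hlast]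
      exact hadj
    intro i h
    have := List.isChain_iff_getElem.mp hch i (by omega)
    simpa [List.get_eq_getElem] using this
  set σ : Equiv.Perm V := L.formPerm with hσ
  have hfix : ∀ x, x ∉ L → σ x = x := fun x hx => List.formPerm_apply_of_notMem hx
  have hstep : ∀ (i : ℕ) (h : i < l.length), σ (L[i]'(by omega)) = L[i+1]'(by omega) := by
    intro i h
    have h2 := List.formPerm_apply_getElem L hLnd i (by omega)
    rw [h2]
    exact getElem_congr_idx_stmt9 (Nat.mod_eq_of_lt (by omega)) _
  have hheadL : L[0]'(by omega) = u := (hLl 0 hlpos).trans hhead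
  have huL : u ∈ L := by
    rw [← hhead, ← hLl 0 hlpos]
    exact List.getElem_mem _
  have hidx : ∀ x ∈ Q, x ∈ L → ∃ (i : ℕ) (h : i < l.length), L[i]'(by omega) = x := by
    intro x hxQ hxL
    rw [hL, List.mem_append] at hxL
    rcases hxL with hxl | hxw
    · obtain ⟨i, hi, hix⟩ := List.mem_iff_getElem.mp hxl
      exact ⟨i, hi, by rw [hLl i hi]; exact hix⟩
    · simp only [List.mem_singleton] at hxw
      exact absurd (hxw ▸ hxQ) hw
  have hmem : ∀ x ∈ Q, σ x ∈ insert w (Q.erase u) := by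
    intro x hxQ
    by_cases hxL : x ∈ L
    · obtain ⟨i, hi, hix⟩ := hidx x hxQ hxL
      rw [← hix, hstep i hi]
      by_cases hil : i + 1 = l.length
      · have : L[i+1]'(by omega) = w := by
          rw [getElem_congr_idx_stmt9 hil (by omega)]
          exact hLw
        rw [this]
        exact Finset.mem_insert_self _ _
      · have hi1 : i + 1 < l.length := by omega
        refine Finset.mem_insert_of_mem (Finset.mem_erase.mpr ⟨?_, ?_⟩)
        · intro h
          have h0 : L[i+1]'(by omega) = L[0]'(by omega) := h.trans hheadL.symm
          exact absurd (hLnd.getElem_inj_iff.mp h0) (by omega)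
        · rw [hLl (i+1) hi1]
          exact hlQ _ (List.getElem_mem _)
    · rw [hfix x hxL]
      exact Finset.mem_insert_of_mem (Finset.mem_erase.mpr ⟨fun h => hxL (h ▸ huL), hxQ⟩)
  have hQ'card : (insert w (Q.erase u)).card = Q.card := by
    rw [Finset.card_insert_of_notMem (fun h => hw (Finset.mem_of_mem_erase h)),
      Finset.card_erase_of_mem hu]
    have : 0 < Q.card := Finset.card_pos.mpr ⟨u, hu⟩
    omega
  have himg : Q.image (⇑σ) = insert w (Q.erase u) := by
    apply Finset.eq_of_subset_of_card_le
    · intro y hy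
      obtain ⟨x, hx, rfl⟩ := Finset.mem_image.mp hy
      exact hmem x hx
    · rw [hQ'card, Finset.card_image_of_injective _ σ.injective]
  refine ⟨{ toFun := fun x => ⟨σ x.1, hmem x.1 x.2⟩
            invFun := fun y => ⟨σ.symm y.1, by
              have hy : (y : V) ∈ Finset.image (⇑σ) Q := by rw [himg]; exact y.2
              obtain ⟨x, hx, hxy⟩ := Finset.mem_image.mp hy
              rw [← hxy, Equiv.symm_apply_apply]; exact hx⟩
            left_inv := fun x => Subtype.ext (σ.symm_apply_apply x.1)
            right_inv := fun y => Subtype.ext (σ.apply_symm_apply y.1) }, ?_, ?_⟩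
  · rintro ⟨x, hxQ⟩
    show σ x = x ∨ G.Adj x (σ x)
    by_cases hxL : x ∈ L
    · obtain ⟨i, hi, hix⟩ := hidx x hxQ hxL
      right
      rw [← hix, hstep i hi]
      exact hLchain i (by omega)
    · left; exact hfix x hxL
  · rintro ⟨a, haQ⟩ ⟨b, hbQ⟩ hab ⟨h1, h2⟩
    replace h1 : σ a = b := h1
    replace h2 : σ b = a := h2
    replace hab : a ≠ b := hab
    have haL : a ∈ L := by
      by_contra haL
      exact hab ((hfix a haL).symm.trans h1)
    obtain ⟨i, hi, hia⟩ := hidx a haQ haL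
    have hb_eq : b = L[i+1]'(by omega) := by rw [← h1, ← hia, hstep i hi]
    have hi1 : i + 1 < l.length := by
      rcases Nat.lt_or_ge (i+1) l.length with h | h
      · exact h
      · have hil : i + 1 = l.length := by omega
        have : L[i+1]'(by omega) = w := by
          rw [getElem_congr_idx_stmt9 hil (by omega)]
          exact hLw
        rw [this] at hb_eq
        exact absurd (hb_eq ▸ hbQ) hw
    have hσb : σ b = L[i+2]'(by omega) := by
      rw [hb_eq]; exact hstep (i+1) hi1
    have h2' : L[i+2]'(by omega) = L[i]'(by omega) :=
      calc L[i+2]'(by omega) = σ b := hσb.symm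
        _ = a := h2
        _ = L[i]'(by omega) := hia.symm
    have := hLnd.getElem_inj_iff.mp h2'
    omega

lemma bddAbove_compCard_stmt9 [Fintype V] (U : Finset V) :
    BddAbove (Set.range
      fun C : (G.induce (U : Set V)).ConnectedComponent => Nat.card C.supp) := by
  classical
  refine ⟨Fintype.card V, ?_⟩
  rintro x ⟨K, rfl⟩
  show Nat.card K.supp ≤ Fintype.card V
  have h1 : Nat.card K.supp ≤ Nat.card ↥(U : Set V) :=
    Nat.card_le_card_of_injective (fun x : K.supp => (x : ↥(U : Set V)))
      Subtype.val_injective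
  have h2 : Nat.card ↥(U : Set V) = U.card := by
    rw [Nat.card_coe_set_eq, Set.ncard_coe_finset]
  have h3 : U.card ≤ Fintype.card V := by
    rw [← Finset.card_univ]
    exact Finset.card_le_card (Finset.subset_univ U)
  omega

end AuxStmt9

/-- If `Q` and `T` are connected vertex sets of size `n` with `Q ∩ T ≠ ∅` and
`Q ≠ T`, then there is a connected vertex set `Q'` of size `n`, reachable from
`Q` in one step, such that the largest connected component of `G[Q' ∩ T]` has at
least one more vertex than that of `G[Q ∩ T]`. -/
theorem stmt9 [Fintype V] [DecidableEq V] (G : SimpleGraph V) (hG : G.Connected)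
    (n : ℕ) (Q T : Finset V)
    (hQconn : ConnSet G Q) (hTconn : ConnSet G T)
    (hQcard : Q.card = n) (hTcard : T.card = n)
    (hint : (Q ∩ T).Nonempty) (hne : Q ≠ T) :
    ∃ Q' : Finset V, Q'.card = n ∧ ConnSet G Q' ∧ OneStep G Q Q' ∧
      maxCompCard G (Q ∩ T) + 1 ≤ maxCompCard G (Q' ∩ T) := by
  classical
  obtain ⟨v0, hv0⟩ := hint
  have hv0Q : v0 ∈ Q := (Finset.mem_inter.mp hv0).1
  have hWQ : Q ∩ T ⊆ Q := Finset.inter_subset_left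
  have hWT : Q ∩ T ⊆ T := Finset.inter_subset_right
  -- the largest component of G[Q ∩ T]
  have hrange_ne : (Set.range
      fun C : (G.induce ((Q ∩ T : Finset V) : Set V)).ConnectedComponent =>
        Nat.card C.supp).Nonempty :=
    ⟨_, ⟨(G.induce ((Q ∩ T : Finset V) : Set V)).connectedComponentMk
      ⟨v0, Finset.mem_coe.mpr hv0⟩, rfl⟩⟩
  have hmax_mem := Nat.sSup_mem hrange_ne (bddAbove_compCard_stmt9 (Q ∩ T))
  obtain ⟨K0, hK0⟩ := hmax_mem
  -- the finset of vertices of that component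
  have hfin : (K0.supp).Finite := Set.toFinite _
  set C : Finset V := hfin.toFinset.image Subtype.val with hC
  have hCmem : ∀ v : V, v ∈ C ↔ ∃ h : v ∈ ((Q ∩ T : Finset V) : Set V),
      (G.induce ((Q ∩ T : Finset V) : Set V)).connectedComponentMk ⟨v, h⟩ = K0 := by
    intro v
    constructor
    · intro hv
      obtain ⟨x, hx, hxv⟩ := Finset.mem_image.mp hv
      have hx' := hfin.mem_toFinset.mp hx
      rw [ConnectedComponent.mem_supp_iff] at hx'
      exact ⟨hxv ▸ x.2, by subst hxv; rw [Subtype.eta]; exact hx'⟩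
    · rintro ⟨h, hk⟩
      exact Finset.mem_image.mpr ⟨⟨v, h⟩, hfin.mem_toFinset.mpr
        ((ConnectedComponent.mem_supp_iff _ _).mpr hk), rfl⟩
  have hCW : C ⊆ Q ∩ T := by
    intro v hv
    obtain ⟨h, _⟩ := (hCmem v).mp hv
    exact Finset.mem_coe.mp h
  have hCcard : C.card = Nat.card K0.supp := by
    rw [hC, Finset.card_image_of_injective _ Subtype.val_injective,
      Nat.card_coe_set_eq, Set.ncard_eq_toFinset_card _ hfin]
  have hCne : C.Nonempty := by
    obtain ⟨⟨x, hx⟩, hxK⟩ := K0.exists_rep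
    refine ⟨x, (hCmem x).mpr ⟨hx, ?_⟩⟩
    exact hxK
  have hCclosed : ∀ x y, x ∈ C → relOnStmt9 G (Q ∩ T) x y → y ∈ C := by
    intro x y hx hr
    obtain ⟨hxW, hxK⟩ := (hCmem x).mp hx
    have hyW : y ∈ ((Q ∩ T : Finset V) : Set V) := Finset.mem_coe.mpr hr.2.1
    refine (hCmem y).mpr ⟨hyW, ?_⟩
    rw [← hxK]
    exact ConnectedComponent.sound (SimpleGraph.Adj.reachable (by exact hr.2.2.symm))
  have hCconn : connOnStmt9 G C := by
    intro a ha b hb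
    obtain ⟨haW, haK⟩ := (hCmem a).mp ha
    obtain ⟨hbW, hbK⟩ := (hCmem b).mp hb
    have hreach : (G.induce ((Q ∩ T : Finset V) : Set V)).Reachable ⟨a, haW⟩ ⟨b, hbW⟩ :=
      ConnectedComponent.exact (haK.trans hbK.symm)
    exact rtg_restrict_stmt9 hCclosed (rtg_fromInduce hreach) ha
  -- vertices in T \ Q and Q \ T
  obtain ⟨t, htT, htQ⟩ : ∃ t ∈ T, t ∉ Q := by
    by_contra h
    push_neg at h
    exact hne (Finset.eq_of_subset_of_card_le h (by rw [hQcard, hTcard])).symm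
  obtain ⟨q, hqQ, hqT⟩ : ∃ q ∈ Q, q ∉ T := by
    by_contra h
    push_neg at h
    exact hne (Finset.eq_of_subset_of_card_le h (by rw [hQcard, hTcard]))
  have hQco : connOnStmt9 G Q := (connOnStmt9_iff ⟨v0, hv0Q⟩).mp hQconn
  have hTco : connOnStmt9 G T := (connOnStmt9_iff ⟨t, htT⟩).mp hTconn
  -- find w ∈ T \ Q adjacent to the component C
  obtain ⟨a0, ha0C⟩ := hCne
  have ha0T : a0 ∈ T := hWT (hCW ha0C)
  obtain ⟨w, hwT, hwC, c', hc'C, hadj⟩ :=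
    exists_exit_stmt9 (hTco a0 ha0T t htT) ha0C (fun h => htQ (hWQ (hCW h)))
  have hc'Q : c' ∈ Q := hWQ (hCW hc'C)
  have hwQ : w ∉ Q := by
    intro hwQ
    exact hwC (hCclosed c' w hc'C ⟨hCW hc'C, Finset.mem_inter.mpr ⟨hwQ, hwT⟩, hadj⟩)
  -- find a removable vertex u outside C
  have hCneQ : C ≠ Q := fun h => hqT (hWT (hCW (h ▸ hqQ)))
  obtain ⟨u, huQ, huC, huconn⟩ :=
    exists_removable_stmt9 (hCW.trans hWQ) ⟨a0, ha0C⟩ hCconn hQco hCneQ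
  -- the new configuration
  set Q' : Finset V := insert w (Q.erase u) with hQ'
  have honestep : OneStep G Q Q' :=
    onestep_move_stmt9 huQ hc'Q hwQ (hQco u huQ c' hc'Q) hadj
  have hc'err : c' ∈ Q.erase u := Finset.mem_erase.mpr ⟨fun h => huC (h ▸ hc'C), hc'Q⟩
  have hQ'co : connOnStmt9 G Q' := connOnStmt9_insert huconn hc'err hadj
  have hwQ' : w ∈ Q' := Finset.mem_insert_self _ _
  have hQ'card : Q'.card = n := by
    rw [hQ', Finset.card_insert_of_notMem (fun h => hwQ (Finset.mem_of_mem_erase h)),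
      Finset.card_erase_of_mem huQ]
    have : 0 < Q.card := Finset.card_pos.mpr ⟨u, huQ⟩
    omega
  -- the intersection grows
  have hCW' : C ⊆ Q' ∩ T := by
    intro v hv
    refine Finset.mem_inter.mpr ⟨Finset.mem_insert_of_mem
      (Finset.mem_erase.mpr ⟨fun h => huC (h ▸ hv), hWQ (hCW hv)⟩), hWT (hCW hv)⟩
  have hwW' : w ∈ Q' ∩ T := Finset.mem_inter.mpr ⟨hwQ', hwT⟩
  have hIC : connOnStmt9 G (insert w C) := connOnStmt9_insert hCconn hc'C hadj
  have hsub : insert w C ⊆ Q' ∩ T := Finset.insert_subset hwW' hCW'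
  set K1 := (G.induce ((Q' ∩ T : Finset V) : Set V)).connectedComponentMk
    ⟨w, Finset.mem_coe.mpr hwW'⟩ with hK1
  have hmemK1 : ∀ v ∈ insert w C, ∃ h : v ∈ ((Q' ∩ T : Finset V) : Set V),
      (⟨v, h⟩ : ↥((Q' ∩ T : Finset V) : Set V)) ∈ K1.supp := by
    intro v hv
    have hvW' : v ∈ Q' ∩ T := hsub hv
    refine ⟨Finset.mem_coe.mpr hvW', ?_⟩
    rw [ConnectedComponent.mem_supp_iff, hK1]
    refine ConnectedComponent.sound ?_
    exact (rtg_toInduce (Relation.ReflTransGen.mono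
      (fun x y h => relOnStmt9_mono hsub h) _ _ (hIC w (Finset.mem_insert_self _ _) v hv)) hwW' hvW').symm
  have hK1fin : K1.supp.Finite := Set.toFinite _
  have hcard1 : (insert w C).card ≤ Nat.card K1.supp := by
    rw [Nat.card_coe_set_eq, Set.ncard_eq_toFinset_card _ hK1fin]
    calc (insert w C).card
        ≤ (hK1fin.toFinset.image Subtype.val).card := by
          apply Finset.card_le_card
          intro v hv
          obtain ⟨h, hmem⟩ := hmemK1 v hv
          exact Finset.mem_image.mpr ⟨⟨v, h⟩, hK1fin.mem_toFinset.mpr hmem, rfl⟩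
      _ = hK1fin.toFinset.card := Finset.card_image_of_injective _ Subtype.val_injective
  have hwC : w ∉ C := hwC
  have hwCcard : (insert w C).card = C.card + 1 := Finset.card_insert_of_notMem hwC
  refine ⟨Q', hQ'card, (connOnStmt9_iff ⟨w, hwQ'⟩).mpr hQ'co, honestep, ?_⟩
  have hle : Nat.card K1.supp ≤ maxCompCard G (Q' ∩ T) :=
    le_csSup (bddAbove_compCard_stmt9 (Q' ∩ T)) ⟨K1, rfl⟩
  have heq : maxCompCard G (Q ∩ T) = C.card := by
    rw [hCcard]
    exact hK0.symm
  omega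
end

section
/- Let G = (V,E) be a finite, simple, undirected, connected graph, and let S, T ⊆ V be connected vertex sets with |S| = |T| = n and S ∩ T = ∅, and let d = min_{(s,t)∈S×T} dist(s,t). Then there exists a connected vertex set Q ⊆ V with |Q| = n and Q ∩ T ≠ ∅, together with a valid plan from S to Q whose makespan is exactly d; moreover d ≤ diam(G), where diam(G) = max_{u,v∈V} dist(u,v). -/
open SimpleGraph

variable {V : Type*}

/-- The diameter of a (finite) graph: the maximum of `dist u v` over all pairs. -/
noncomputable def graphDiam (G : SimpleGraph V) : ℕ :=
  sSup (Set.range fun p : V × V => G.dist p.1 p.2)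

namespace Stmt11Aux
variable [DecidableEq V] {G : SimpleGraph V}
set_option linter.unusedSectionVars false

lemma connSet_nonempty {R : Finset V} (h : ConnSet G R) : R.Nonempty := by
  obtain ⟨⟨x, hx⟩⟩ := h.nonempty
  exact ⟨x, hx⟩

lemma walks_of_connSet {R : Finset V} (h : ConnSet G R) :
    ∀ a ∈ R, ∀ b ∈ R, ∃ p : G.Walk a b, ∀ x ∈ p.support, x ∈ R := by
  intro a ha b hb
  obtain ⟨q⟩ := h.preconnected ⟨a, ha⟩ ⟨b, hb⟩
  refine ⟨q.map (SimpleGraph.Embedding.induce (R : Set V)).toHom, ?_⟩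
  intro x hx
  replace hx : x ∈ (q.map (SimpleGraph.Embedding.induce (R : Set V)).toHom).support := hx
  rw [Walk.support_map, List.mem_map] at hx
  obtain ⟨⟨y, hy⟩, _, rfl⟩ := hx
  exact hy

lemma reach_induce {s : Set V} :
    ∀ {a b : V} (p : G.Walk a b), (∀ x ∈ p.support, x ∈ s) →
      ∀ (ha : a ∈ s) (hb : b ∈ s), (G.induce s).Reachable ⟨a, ha⟩ ⟨b, hb⟩ := by
  intro a b p
  induction p with
  | nil => intro _ ha hb; rfl
  | @cons u w v h q ih =>
    intro hp ha hb
    have hw : w ∈ s := hp w (by simp [Walk.support_cons, q.start_mem_support])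
    have hadj : (G.induce s).Adj ⟨u, ha⟩ ⟨w, hw⟩ := h
    exact hadj.reachable.trans (ih (fun x hx => hp x (by simp [Walk.support_cons, hx])) hw hb)

lemma connSet_of_hub {R : Finset V} {w : V} (hw : w ∈ R)
    (h : ∀ y ∈ R, ∃ p : G.Walk w y, ∀ x ∈ p.support, x ∈ R) : ConnSet G R := by
  haveI : Nonempty ((R : Set V) : Type _) := ⟨⟨w, hw⟩⟩
  refine ⟨?_⟩
  rintro ⟨a, ha⟩ ⟨b, hb⟩
  obtain ⟨pa, hpa⟩ := h a ha
  obtain ⟨pb, hpb⟩ := h b hb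
  exact (reach_induce pa hpa hw ha).symm.trans (reach_induce pb hpb hw hb)

lemma connSet_insert {Q : Finset V} (hQ : ConnSet G Q) {c b : V}
    (hc : c ∈ Q) (hadj : G.Adj c b) : ConnSet G (insert b Q) := by
  apply connSet_of_hub (w := c) (Finset.mem_insert_of_mem hc)
  intro y hy
  rcases Finset.mem_insert.1 hy with rfl | hyQ
  · exact ⟨Walk.cons hadj Walk.nil, by simp [Walk.support_cons, hc]⟩
  · obtain ⟨p, hp⟩ := walks_of_connSet hQ c hc y hyQ
    exact ⟨p, fun z hz => Finset.mem_insert_of_mem (hp z hz)⟩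

lemma dist_getVert_le (hG : G.Connected) :
    ∀ {u v : V} (p : G.Walk u v) (j : ℕ), G.dist u (p.getVert j) ≤ j := by
  intro u v p
  induction p with
  | nil => intro j; simp [Walk.getVert, SimpleGraph.dist_self]
  | @cons u w v h q ih =>
    intro j
    cases j with
    | zero => simp [Walk.getVert_zero]
    | succ j =>
      rw [Walk.getVert_cons_succ]
      calc G.dist u (q.getVert j) ≤ G.dist u w + G.dist w (q.getVert j) := hG.dist_triangle
        _ ≤ 1 + j := by
            have h1 : G.dist u w ≤ 1 := by
              have := SimpleGraph.dist_le (Walk.cons h Walk.nil)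
              simpa using this
            exact Nat.add_le_add h1 (ih j)
        _ = j + 1 := Nat.add_comm 1 j

lemma dist_getVert_end :
    ∀ {u v : V} (p : G.Walk u v) (j : ℕ), G.dist (p.getVert j) v ≤ p.length - j := by
  intro u v p
  induction p with
  | nil => intro j; simp [Walk.getVert, SimpleGraph.dist_self]
  | @cons u w v h q ih =>
    intro j
    cases j with
    | zero =>
      rw [Walk.getVert_zero]
      simpa using SimpleGraph.dist_le (Walk.cons h q)
    | succ j =>
      rw [Walk.getVert_cons_succ]
      have := ih j
      simpa [Walk.length_cons, Nat.succ_sub_succ] using this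

lemma exists_noncut {R : Finset V} (hR : ConnSet G R) (hcard : 2 ≤ R.card)
    {w : V} (hw : w ∈ R) :
    ∃ x ∈ R, x ≠ w ∧ ConnSet G (R.erase x) := by
  classical
  have hwalks := walks_of_connSet hR
  set D : V → Set ℕ :=
    fun y => {ℓ | ∃ p : G.Walk w y, (∀ x ∈ p.support, x ∈ R) ∧ p.length = ℓ} with hD
  have hDne : ∀ y ∈ R, (D y).Nonempty := by
    intro y hy
    obtain ⟨p, hp⟩ := hwalks w hw y hy
    exact ⟨p.length, p, hp, rfl⟩
  set dd : V → ℕ := fun y => sInf (D y) with hdd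
  have hmin : ∀ y ∈ R, ∃ p : G.Walk w y, (∀ x ∈ p.support, x ∈ R) ∧ p.length = dd y :=
    fun y hy => Nat.sInf_mem (hDne y hy)
  have hdd_le : ∀ (y : V) (p : G.Walk w y), (∀ x ∈ p.support, x ∈ R) → dd y ≤ p.length :=
    fun y p hp => Nat.sInf_le ⟨p, hp, rfl⟩
  obtain ⟨x, hx, hxmax⟩ := R.exists_max_image dd ⟨w, hw⟩
  obtain ⟨y0, hy0, hy0w⟩ := Finset.exists_mem_ne (s := R) (by omega) w
  have h1 : 1 ≤ dd y0 := by
    by_contra hcon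
    obtain ⟨p, hp, hlen⟩ := hmin y0 hy0
    have hlen0 : p.length = 0 := by omega
    cases p with
    | nil => exact hy0w rfl
    | cons h q => simp [Walk.length_cons] at hlen0
  have hddw : dd w = 0 :=
    Nat.le_antisymm (by simpa using hdd_le w Walk.nil (by simp [hw])) (Nat.zero_le _)
  have hxw : x ≠ w := by
    rintro rfl
    have := hxmax y0 hy0
    omega
  refine ⟨x, hx, hxw, ?_⟩
  apply connSet_of_hub (w := w) (Finset.mem_erase.2 ⟨Ne.symm hxw, hw⟩)
  intro y hy
  obtain ⟨hyx, hyR⟩ := Finset.mem_erase.1 hy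
  obtain ⟨p, hp, hlen⟩ := hmin y hyR
  have hxsup : x ∉ p.support := by
    intro hxs
    have hle : dd x ≤ (p.takeUntil x hxs).length :=
      hdd_le x _ (fun z hz => hp z (p.support_takeUntil_subset hxs hz))
    have hsplit : (p.takeUntil x hxs).length + (p.dropUntil x hxs).length = p.length := by
      have := congrArg Walk.length (p.take_spec hxs)
      rwa [Walk.length_append] at this
    have hdrop : 1 ≤ (p.dropUntil x hxs).length := by
      rcases Nat.eq_zero_or_pos (p.dropUntil x hxs).length with h0 | hpos
      · exfalso
        cases hq : p.dropUntil x hxs with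
        | nil => exact hyx rfl
        | cons h q => rw [hq] at h0; simp [Walk.length_cons] at h0
      · exact hpos
    have := hxmax y hyR
    omega
  exact ⟨p, fun z hz => Finset.mem_erase.2 ⟨fun h => hxsup (h ▸ hz), hp z hz⟩⟩

lemma getElem_congr' {α : Type*} (l : List α) {i j : ℕ} (h : i = j) (hj : j < l.length) :
    l[i]'(h ▸ hj) = l[j]'hj := by subst h; rfl

lemma getElem_concat_self' {α : Type*} {l : List α} {b : α} {i : ℕ} (hi : i = l.length)
    (h : i < (l ++ [b]).length) : (l ++ [b])[i]'h = b := by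
  subst hi
  rw [List.getElem_append_right (le_refl _)]
  simp

lemma getElem_concat_left' {α : Type*} {l : List α} {b : α} {i : ℕ} (hil : i < l.length)
    (h : i < (l ++ [b]).length) : (l ++ [b])[i]'h = l[i]'hil :=
  List.getElem_append_left hil

lemma getElem_zero_of_eq_cons {α : Type*} {l : List α} {x : α} {t : List α} (h : l = x :: t)
    (h0 : 0 < l.length) : l[0]'h0 = x := by subst h; rfl

lemma oneStep_shift {Q : Finset V} (hQ : ConnSet G Q) {a c b : V}
    (ha : a ∈ Q) (hc : c ∈ Q) (hb : b ∉ Q) (hadj : G.Adj c b) :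
    OneStep G Q (insert b (Q.erase a)) := by
  classical
  obtain ⟨p0, hp0⟩ := walks_of_connSet hQ a ha c hc
  set p : G.Walk a c := (p0.toPath : G.Walk a c) with hpdef
  have hpsub : ∀ x ∈ p.support, x ∈ Q := fun x hx => hp0 x (p0.support_toPath_subset hx)
  have hnd : p.support.Nodup := p0.toPath.2.support_nodup
  set L : List V := p.support ++ [b] with hL
  have hbp : b ∉ p.support := fun h => hb (hpsub b h)
  have hndL : L.Nodup := by
    rw [hL, List.nodup_append]
    refine ⟨hnd, List.nodup_singleton b, ?_⟩
    intro x hx y hxb hxy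
    rw [List.mem_singleton] at hxb
    subst hxb
    exact hbp (hxy ▸ hx)
  set m := p.support.length with hm
  have hm1 : 1 ≤ m := by
    rw [hm]
    exact List.length_pos_iff.2 p.support_ne_nil
  have hLlen : L.length = m + 1 := by simp [hL, hm]
  have hLmval : ∀ (h : m < L.length), L[m]'h = b := by
    intro h
    exact getElem_concat_self' rfl h
  have hLival : ∀ (i : ℕ) (h : i < m), L[i]'(by omega) = p.support[i]'h := by
    intro i h
    exact getElem_concat_left' h (by simp only [List.length_append, List.length_singleton]; omega)
  have h0a : ∀ (h : 0 < m), p.support[0]'h = a := by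
    intro h
    exact getElem_zero_of_eq_cons p.support_eq_cons h
  set σ : Equiv.Perm V := L.formPerm with hσdef
  have hσget : ∀ (i : ℕ) (hi : i + 1 < L.length), σ (L[i]'(by omega)) = L[i+1]'hi := by
    intro i hi
    rw [List.formPerm_apply_getElem L hndL i (by omega)]
    exact getElem_congr' L (Nat.mod_eq_of_lt hi) hi
  have hσb : σ b = a := by
    have h1 := List.formPerm_apply_getElem L hndL m (by omega)
    rw [hLmval (by omega)] at h1
    rw [h1]
    have hmod : (m + 1) % L.length = 0 := by rw [hLlen]; simp
    rw [getElem_congr' L hmod (by omega)]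
    rw [hLival 0 (by omega)]
    exact h0a (by omega)
  have hσout : ∀ x ∉ L, σ x = x := fun x hx => List.formPerm_apply_of_notMem hx
  have haL : a ∈ L := by
    rw [hL, List.mem_append]
    exact Or.inl p.start_mem_support
  have hbL : b ∈ L := by rw [hL, List.mem_append]; simp
  -- index extraction for members of Q
  have hidxQ : ∀ v, v ∈ Q → v ∈ L → ∃ i, ∃ hi : i < m, L[i]'(by omega) = v := by
    intro v hvQ hvL
    obtain ⟨i, hi, hvi⟩ := List.getElem_of_mem hvL
    have him : i ≠ m := by
      rintro rfl
      rw [hLmval hi] at hvi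
      exact hb (hvi ▸ hvQ)
    exact ⟨i, by omega, hvi⟩
  have hmemL : ∀ (i : ℕ) (h : i < m), L[i]'(by omega) ∈ Q := by
    intro i h
    rw [hLival i h]
    exact hpsub _ (List.getElem_mem _)
  -- chain of adjacency
  have hchain : List.Chain' G.Adj L := by
    rw [hL, List.Chain', List.isChain_append]
    refine ⟨p.isChain_adj_support, List.isChain_singleton b, ?_⟩
    intro x hx y hy
    rw [List.getLast?_eq_getLast_of_ne_nil p.support_ne_nil] at hx
    have hx' : x = c := by
      have := p.getLast_support
      simp only [Option.mem_def, Option.some.injEq] at hx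
      rw [← hx]
      exact this
    have hy' : y = b := by
      simp only [List.head?_cons, Option.mem_def, Option.some.injEq] at hy
      exact hy.symm
    rw [hx', hy']
    exact hadj
  have hadjL : ∀ (i : ℕ) (hi : i + 1 < L.length), G.Adj (L[i]'(by omega)) (L[i+1]'hi) := by
    intro i hi
    have h2 := List.isChain_iff_getElem.mp hchain i (by omega)
    simpa [List.get_eq_getElem] using h2
  -- membership equivalence
  have hanotin : a ∉ insert b (Q.erase a) := by
    intro h
    rcases Finset.mem_insert.1 h with rfl | h
    · exact hb ha
    · exact absurd (Finset.mem_erase.1 h).1 (by simp)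
  have hmem : ∀ v, v ∈ Q ↔ σ v ∈ insert b (Q.erase a) := by
    intro v
    by_cases hvL : v ∈ L
    · constructor
      · intro hvQ
        obtain ⟨i, hi, hvi⟩ := hidxQ v hvQ hvL
        have hi1 : i + 1 < L.length := by omega
        rw [← hvi, hσget i hi1]
        by_cases h2 : i + 1 = m
        · rw [getElem_congr' L h2 (by omega), hLmval (by omega)]
          exact Finset.mem_insert_self b _
        · have hi1m : i + 1 < m := by omega
          apply Finset.mem_insert_of_mem
          refine Finset.mem_erase.2 ⟨?_, hmemL (i+1) hi1m⟩
          intro heq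
          have h0 : L[0]'(by omega) = a := by rw [hLival 0 (by omega)]; exact h0a (by omega)
          have : i + 1 = 0 := (List.Nodup.getElem_inj_iff hndL).1 (by rw [heq, h0])
          omega
      · intro hσv
        obtain ⟨i, hi, hvi⟩ := List.getElem_of_mem hvL
        by_cases him : i = m
        · exfalso
          have hvb : v = b := by rw [← hvi, getElem_congr' L him (by omega), hLmval (by omega)]
          rw [hvb, hσb] at hσv
          exact hanotin hσv
        · rw [← hvi, hLival i (by omega)]
          exact hpsub _ (List.getElem_mem _)
    · rw [hσout v hvL]
      constructor
      · intro hvQ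
        apply Finset.mem_insert_of_mem
        exact Finset.mem_erase.2 ⟨fun h => hvL (h ▸ haL), hvQ⟩
      · intro hv
        rcases Finset.mem_insert.1 hv with rfl | hv
        · exact absurd hbL hvL
        · exact (Finset.mem_erase.1 hv).2
  refine ⟨Equiv.subtypeEquiv σ hmem, ?_, ?_⟩
  · rintro ⟨v, hvQ⟩
    show (σ v = v) ∨ G.Adj v (σ v)
    by_cases hvL : v ∈ L
    · right
      obtain ⟨i, hi, hvi⟩ := hidxQ v hvQ hvL
      have hi1 : i + 1 < L.length := by omega
      rw [← hvi, hσget i hi1]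
      exact hadjL i hi1
    · left; exact hσout v hvL
  · rintro ⟨u, huQ⟩ ⟨v, hvQ⟩ huv ⟨h1, h2⟩
    simp only [Equiv.subtypeEquiv_apply] at h1 h2
    replace h1 : σ u = v := h1
    replace h2 : σ v = u := h2
    have huL : u ∈ L := by
      by_contra huL
      exact huv ((hσout u huL).symm.trans h1)
    have hvL : v ∈ L := by
      by_contra hvL
      exact huv (((hσout v hvL).symm.trans h2).symm)
    obtain ⟨i, hi, hui⟩ := hidxQ u huQ huL
    obtain ⟨j, hj, hvj⟩ := hidxQ v hvQ hvL
    have hi1 : i + 1 < L.length := by omega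
    have hj1 : j + 1 < L.length := by omega
    have e1 : L[i+1]'hi1 = L[j]'(by omega) := by
      rw [← hσget i hi1, hui, h1, hvj]
    have e2 : L[j+1]'hj1 = L[i]'(by omega) := by
      rw [← hσget j hj1, hvj, h2, hui]
    have q1 : i + 1 = j := (List.Nodup.getElem_inj_iff hndL).1 e1
    have q2 : j + 1 = i := (List.Nodup.getElem_inj_iff hndL).1 e2
    omega


end Stmt11Aux

/-- If `S` and `T` are disjoint connected vertex sets of size `n` and
`d = min_{(s,t) ∈ S × T} dist(s,t)`, then there are a connected vertex set `Q`
of size `n` with `Q ∩ T ≠ ∅` and a valid plan from `S` to `Q` whose makespan is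
exactly `d`; moreover `d ≤ diam(G)`. -/
theorem stmt11 [Fintype V] [DecidableEq V] (G : SimpleGraph V) (hG : G.Connected)
    (n : ℕ) (S T : Finset V)
    (hSconn : ConnSet G S) (hTconn : ConnSet G T)
    (hScard : S.card = n) (hTcard : T.card = n)
    (hdisj : S ∩ T = ∅)
    (d : ℕ) (hd : d = setDist G S T) :
    (∃ (Q : Finset V) (P : ℕ → Finset V),
      Q.card = n ∧ ConnSet G Q ∧ (Q ∩ T).Nonempty ∧ ValidPlan G n S Q d P) ∧
    d ≤ graphDiam G := by
  classical
  have hSne : S.Nonempty := Stmt11Aux.connSet_nonempty hSconn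
  have hTne : T.Nonempty := Stmt11Aux.connSet_nonempty hTconn
  have hn : 1 ≤ n := by
    rw [← hScard]
    exact Finset.card_pos.2 hSne
  obtain ⟨s0, hs0⟩ := hSne
  obtain ⟨t0, ht0⟩ := hTne
  have hset_ne : {d | ∃ a ∈ S, ∃ b ∈ T, G.dist a b = d}.Nonempty :=
    ⟨G.dist s0 t0, s0, hs0, t0, ht0, rfl⟩
  have hdmem : ∃ a ∈ S, ∃ b ∈ T, G.dist a b = d := by
    rw [hd]
    exact Nat.sInf_mem hset_ne
  obtain ⟨s, hs, t, ht, hst⟩ := hdmem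
  have hdle : ∀ a ∈ S, ∀ b ∈ T, d ≤ G.dist a b := by
    intro a ha b hb
    rw [hd]
    exact Nat.sInf_le ⟨a, ha, b, hb, rfl⟩
  have hdiam : d ≤ graphDiam G := by
    rw [← hst]
    exact le_csSup (Set.Finite.bddAbove (Set.finite_range _)) ⟨(s, t), rfl⟩
  refine ⟨?_, hdiam⟩
  obtain ⟨p, hplen⟩ := (hG.preconnected s t).exists_walk_length_eq_dist
  have hplen' : p.length = d := by rw [hplen, hst]
  have hd1 : ∀ j : ℕ, G.dist s (p.getVert j) ≤ j := Stmt11Aux.dist_getVert_le hG p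
  have hd2 : ∀ j : ℕ, G.dist (p.getVert j) t ≤ d - j := by
    intro j
    have := Stmt11Aux.dist_getVert_end p j
    omega
  have hnotS : ∀ j : ℕ, 0 < j → j ≤ d → p.getVert j ∉ S := by
    intro j hj hjd hmem
    have h2 := hdle _ hmem t ht
    have h3 := hd2 j
    omega
  have hdistinct : ∀ i k : ℕ, i ≤ k → k + 1 ≤ d → p.getVert (k + 1) ≠ p.getVert i := by
    intro i k hik hkd heq
    have h1 : G.dist s (p.getVert (k + 1)) ≤ i := by rw [heq]; exact hd1 i
    have h2 := hd2 (k + 1)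
    have h3 : G.dist s t ≤ G.dist s (p.getVert (k + 1)) + G.dist (p.getVert (k + 1)) t :=
      hG.dist_triangle
    rw [hst] at h3
    omega
  have main : ∀ k : ℕ, k ≤ d → ∃ P : ℕ → Finset V, P 0 = S ∧
      (∀ j ≤ k, (P j).card = n ∧ ConnSet G (P j) ∧
        (∀ x ∈ P j, x ∈ S ∨ ∃ i ≤ j, p.getVert i = x) ∧ p.getVert j ∈ P j) ∧
      (∀ j < k, OneStep G (P j) (P (j + 1))) := by
    intro k
    induction k with
    | zero =>
      intro _
      refine ⟨fun _ => S, rfl, ?_, fun j hj => absurd hj (Nat.not_lt_zero j)⟩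
      intro j hj
      have hj0 : j = 0 := Nat.le_zero.1 hj
      subst hj0
      refine ⟨hScard, hSconn, fun x hx => Or.inl hx, ?_⟩
      rw [p.getVert_zero]
      exact hs
    | succ k ih =>
      intro hk1
      obtain ⟨P, hP0, hPinv, hPstep⟩ := ih (by omega)
      obtain ⟨hcard, hconn, hsub, hcmem⟩ := hPinv k le_rfl
      have hbnot : p.getVert (k + 1) ∉ P k := by
        intro hmem
        rcases hsub _ hmem with hS | ⟨i, hi, hib⟩
        · exact hnotS (k + 1) (by omega) hk1 hS
        · exact hdistinct i k hi hk1 hib.symm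
      have hadjcb : G.Adj (p.getVert k) (p.getVert (k + 1)) :=
        p.adj_getVert_succ (by omega)
      have hconn' : ConnSet G (insert (p.getVert (k + 1)) (P k)) :=
        Stmt11Aux.connSet_insert hconn hcmem hadjcb
      have hcard' : (insert (p.getVert (k + 1)) (P k)).card = n + 1 := by
        rw [Finset.card_insert_of_notMem hbnot, hcard]
      obtain ⟨x, hx, hxb, hxconn⟩ :=
        Stmt11Aux.exists_noncut hconn' (by omega)
          (Finset.mem_insert_self (p.getVert (k + 1)) (P k))
      have hxQ : x ∈ P k := by
        rcases Finset.mem_insert.1 hx with h | h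
        · exact absurd h hxb
        · exact h
      have hER : (insert (p.getVert (k + 1)) (P k)).erase x
          = insert (p.getVert (k + 1)) ((P k).erase x) := by
        ext z
        simp only [Finset.mem_erase, Finset.mem_insert]
        constructor
        · rintro ⟨hzx, rfl | hz⟩
          · exact Or.inl rfl
          · exact Or.inr ⟨hzx, hz⟩
        · rintro (rfl | ⟨hzx, hz⟩)
          · exact ⟨Ne.symm hxb, Or.inl rfl⟩
          · exact ⟨hzx, Or.inr hz⟩
      have hstep : OneStep G (P k) (insert (p.getVert (k + 1)) ((P k).erase x)) :=
        Stmt11Aux.oneStep_shift hconn hxQ hcmem hbnot hadjcb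
      have hQncard : (insert (p.getVert (k + 1)) ((P k).erase x)).card = n := by
        rw [Finset.card_insert_of_notMem (fun h => hbnot (Finset.mem_of_mem_erase h)),
          Finset.card_erase_of_mem hxQ, hcard]
        omega
      have hQnconn : ConnSet G (insert (p.getVert (k + 1)) ((P k).erase x)) := hER ▸ hxconn
      refine ⟨fun j => if j ≤ k then P j else insert (p.getVert (k + 1)) ((P k).erase x),
        ?_, ?_, ?_⟩
      · simp only [Nat.zero_le, if_pos]
        exact hP0
      · intro j hj
        by_cases hjk : j ≤ k
        · simp only [if_pos hjk]
          exact hPinv j hjk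
        · have hj1 : j = k + 1 := by omega
          subst hj1
          simp only [if_neg hjk]
          refine ⟨hQncard, hQnconn, ?_, Finset.mem_insert_self _ _⟩
          intro z hz
          rcases Finset.mem_insert.1 hz with rfl | hz'
          · exact Or.inr ⟨k + 1, le_rfl, rfl⟩
          · rcases hsub z (Finset.mem_of_mem_erase hz') with hS | ⟨i, hi, hiz⟩
            · exact Or.inl hS
            · exact Or.inr ⟨i, by omega, hiz⟩
      · intro j hj
        by_cases hjk : j < k
        · simp only [if_pos (Nat.le_of_lt hjk), if_pos (by omega : j + 1 ≤ k)]
          exact hPstep j hjk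
        · have hj1 : j = k := by omega
          subst hj1
          simp only [if_pos le_rfl, if_neg (by omega : ¬ j + 1 ≤ j)]
          exact hstep
  obtain ⟨P, hP0, hPinv, hPstep⟩ := main d le_rfl
  have htP : t ∈ P d := by
    have h1 : p.getVert d ∈ P d := (hPinv d le_rfl).2.2.2
    have h2 : p.getVert p.length = t := p.getVert_length
    rw [hplen'] at h2
    rwa [h2] at h1
  exact ⟨P d, P, (hPinv d le_rfl).1, (hPinv d le_rfl).2.1,
    ⟨t, Finset.mem_inter.2 ⟨htP, ht⟩⟩, hP0, rfl,
    fun k hk => ⟨(hPinv k hk).1, (hPinv k hk).2.1⟩, hPstep⟩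
end
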